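/- arXiv:1810.01699 — 5 statements merged into one kernel-verified Lean document; each statement's English description precedes it below -/
import Mathlib

section
/- (Corollary 2.2, Cayley trees and dynamics) Let d ≥ 2 be an integer, let ξ ∈ ℂ with |ξ| = 1, and let b ∈ ℝ with b ≠ −1. Define sequences (A_k)_{k≥0}, (B_k)_{k≥0} in ℂ by A_0 = ξ, B_0 = 1, A_{k+1} = ξ·(A_k + b·B_k)^d and B_{k+1} = (b·A_k + B_k)^d, so that A_k and B_k are the partition functions of the rooted Cayley tree T_{k,d} conditioned on the root being occupied resp. unoccupied, and A_k + B_k = Z_{T_{k,d}}(ξ,b). Then the orbit of 1 under f_{ξ,b} avoids −1 (i.e. f_{ξ,b}^{∘k}(1) ≠ −1 for all k ≥ 0) if and only if A_k + B_k ≠ 0 for all k ≥ 0. -/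
/-- The rational map `f_{ξ,b}(R) = ξ·((R+b)/(bR+1))^d` associated to the Ising model. -/
noncomputable def fIsing (d : ℕ) (ξ b R : ℂ) : ℂ := ξ * ((R + b) / (b * R + 1)) ^ d

lemma normSq_key (b : ℝ) (A B : ℂ) :
    Complex.normSq (A + (b : ℂ) * B) - Complex.normSq ((b : ℂ) * A + B)
      = (1 - b ^ 2) * (Complex.normSq A - Complex.normSq B) := by
  simp only [Complex.normSq_apply, Complex.add_re, Complex.add_im, Complex.mul_re,
    Complex.mul_im, Complex.ofReal_re, Complex.ofReal_im]
  ring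

/-- Corollary 2.2: the orbit of 1 under `f_{ξ,b}` avoids -1 if and only if the Ising
partition functions `A_k + B_k` of the rooted Cayley trees `T_{k,d}` are all nonzero. -/
theorem cayley_tree_dynamics (d : ℕ) (hd : 2 ≤ d) (ξ : ℂ) (hξ : ‖ξ‖ = 1)
    (b : ℝ) (hb : b ≠ -1) (A B : ℕ → ℂ)
    (hA0 : A 0 = ξ) (hB0 : B 0 = 1)
    (hA : ∀ k, A (k + 1) = ξ * (A k + (b : ℂ) * B k) ^ d)
    (hB : ∀ k, B (k + 1) = ((b : ℂ) * A k + B k) ^ d) :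
    (∀ k : ℕ, (fIsing d ξ (b : ℂ))^[k] 1 ≠ -1) ↔ (∀ k : ℕ, A k + B k ≠ 0) := by
  -- |A k| = |B k| for all k
  have habs : ∀ k, ‖A k‖ = ‖B k‖ := by
    intro k
    induction k with
    | zero => simp [hA0, hB0, hξ]
    | succ k ih =>
      have hnsq : Complex.normSq (A k) = Complex.normSq (B k) := by
        rw [← Complex.sq_norm, ← Complex.sq_norm, ih]
      have h2 : Complex.normSq (A k + (b : ℂ) * B k)
          = Complex.normSq ((b : ℂ) * A k + B k) := by
        have := normSq_key b (A k) (B k)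
        rw [hnsq] at this
        linarith [this]
      have h3 : ‖A k + (b : ℂ) * B k‖
          = ‖(b : ℂ) * A k + B k‖ := by
        rw [Complex.norm_def, Complex.norm_def, h2]
      rw [hA k, hB k, norm_mul, norm_pow, norm_pow, hξ, one_mul, h3]
  -- base case: f(1) = ξ = A 0 / B 0
  have hbC : (b : ℂ) + 1 ≠ 0 := by
    intro h
    apply hb
    have : ((b + 1 : ℝ) : ℂ) = 0 := by push_cast; linear_combination h
    have := Complex.ofReal_eq_zero.mp this
    linarith
  have hf1 : (fIsing d ξ (b : ℂ))^[1] 1 = A 0 / B 0 := by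
    rw [hA0, hB0, div_one]
    simp only [Function.iterate_one, fIsing, mul_one]
    rw [add_comm (1 : ℂ) (b : ℂ), div_self hbC, one_pow, mul_one]
  -- step lemma: if B k ≠ 0, b A k + B k ≠ 0 and f^[k+1] 1 = A k / B k then
  -- f^[k+2] 1 = A (k+1) / B (k+1)
  have step : ∀ k, B k ≠ 0 → (b : ℂ) * A k + B k ≠ 0 →
      (fIsing d ξ (b : ℂ))^[k + 1] 1 = A k / B k →
      (fIsing d ξ (b : ℂ))^[k + 2] 1 = A (k + 1) / B (k + 1) := by
    intro k hBk hden hR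
    have : (k + 2) = (k + 1) + 1 := rfl
    rw [this, Function.iterate_succ_apply', hR, fIsing, hA k, hB k]
    have key : (A k / B k + (b : ℂ)) / ((b : ℂ) * (A k / B k) + 1)
        = (A k + (b : ℂ) * B k) / ((b : ℂ) * A k + B k) := by
      field_simp
    rw [key, div_pow, mul_div_assoc]
  constructor
  · -- orbit avoids -1 → partition functions nonzero
    intro horb
    have key : ∀ k, B k ≠ 0 ∧ (fIsing d ξ (b : ℂ))^[k + 1] 1 = A k / B k := by
      intro k
      induction k with
      | zero => exact ⟨by rw [hB0]; exact one_ne_zero, hf1⟩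
      | succ k ih =>
        obtain ⟨hBk, hR⟩ := ih
        have hden : (b : ℂ) * A k + B k ≠ 0 := by
          intro h0
          have hAk : ‖A k‖ ≠ 0 := by
            rw [habs k]; exact norm_ne_zero_iff.mpr hBk
          have hbA : (b : ℂ) * A k = -B k := by linear_combination h0
          have habsb : |b| * ‖A k‖ = ‖B k‖ := by
            have := congrArg norm hbA
            simpa [norm_mul, Complex.norm_real, Real.norm_eq_abs] using this
          have hb1 : |b| = 1 :=
            mul_right_cancel₀ hAk (by rw [one_mul, habsb, habs k])
          have : b = 1 ∨ b = -1 := abs_eq (by norm_num : (0:ℝ) ≤ 1) |>.mp hb1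
          rcases this with h1 | h1
          · -- b = 1 ⇒ A k = -B k ⇒ R = -1, contradicting orbit
            have hA1 : A k = -B k := by
              rw [h1] at hbA; simpa using hbA
            apply horb (k + 1)
            rw [hR, hA1, neg_div, div_self hBk]
          · exact hb h1
        have hB1 : B (k + 1) ≠ 0 := by
          rw [hB k]; exact pow_ne_zero _ hden
        exact ⟨hB1, step k hBk hden hR⟩
    intro k hAB
    obtain ⟨hBk, hR⟩ := key k
    apply horb (k + 1)
    rw [hR]
    have : A k = -B k := by linear_combination hAB
    rw [this, neg_div, div_self hBk]
  · -- partition functions nonzero → orbit avoids -1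
    intro hAB
    have key : ∀ k, B k ≠ 0 ∧ (fIsing d ξ (b : ℂ))^[k + 1] 1 = A k / B k := by
      intro k
      induction k with
      | zero => exact ⟨by rw [hB0]; exact one_ne_zero, hf1⟩
      | succ k ih =>
        obtain ⟨hBk, hR⟩ := ih
        have hden : (b : ℂ) * A k + B k ≠ 0 := by
          intro h0
          have hB1 : B (k + 1) = 0 := by
            rw [hB k, h0]
            exact zero_pow (by omega)
          have hA1 : A (k + 1) = 0 := by
            have := habs (k + 1)
            rw [hB1, norm_zero] at this
            exact norm_eq_zero.mp this
          exact hAB (k + 1) (by rw [hA1, hB1, add_zero])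
        have hB1 : B (k + 1) ≠ 0 := by
          rw [hB k]; exact pow_ne_zero _ hden
        exact ⟨hB1, step k hBk hden hR⟩
    intro k
    cases k with
    | zero =>
      simp only [Function.iterate_zero, id_eq]
      intro h
      norm_num at h
    | succ k =>
      obtain ⟨hBk, hR⟩ := key k
      rw [hR]
      intro h
      apply hAB k
      have : A k = -B k := by
        field_simp at h
        linear_combination h
      rw [this]; ring
end

section
/- (Lemma 3.5, expansion trichotomy on the circle) Let d ≥ 2 be an integer, let ξ ∈ ℂ with |ξ| = 1, and let b > 0 with b ≠ 1; set b_c = (d−1)/(d+1). Then: (i) if 0 < b < b_c or b > 1/b_c, there is a constant κ > 1 (independent of ξ) with |f'_{ξ,b}(R)| ≥ κ for all R ∈ ∂𝔻; (ii) if b = b_c or b = 1/b_c, then |f'_{ξ,b}(R)| ≥ 1 for all R ∈ ∂𝔻, with equality exactly at R = 1, where |f'_{ξ,b}(1)| = 1; (iii) if b_c < b < 1/b_c, then |f'_{ξ,b}(1)| = d·|1−b|/(1+b) < 1. In all cases |f'_{ξ,b}(R)| for R ∈ ∂𝔻 does not depend on ξ and is strictly increasing as a function of |Arg(R)|. -/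
lemma abs_deriv_fIsing (d : ℕ) (b : ℝ) (hb₀ : 0 < b) (hb₁ : b ≠ 1)
    (ξ R : ℂ) (hξ : ‖ξ‖ = 1) (hR : ‖R‖ = 1) :
    ‖deriv (fIsing d ξ (b:ℂ)) R‖ = (d * |1 - b^2|) / (1 + b^2 + 2*b*R.re) := by
  have hnR : Complex.normSq R = 1 := by rw [← Complex.sq_norm, hR]; norm_num
  have hre : R.re * R.re + R.im * R.im = 1 := by simpa [Complex.normSq_apply] using hnR
  have hden : (b:ℂ) * R + 1 ≠ 0 := by
    intro h
    have h2 : (b:ℂ) * R = -1 := by linear_combination h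
    have h3 := congrArg (‖·‖) h2
    simp [hR, abs_of_pos hb₀] at h3
    exact hb₁ h3
  have habs : ‖R + b‖ = ‖(b:ℂ) * R + 1‖ := by
    have h1 : Complex.normSq (R + b) = Complex.normSq ((b:ℂ)*R + 1) := by
      simp only [Complex.normSq_apply, Complex.add_re, Complex.add_im, Complex.mul_re,
        Complex.mul_im, Complex.ofReal_re, Complex.ofReal_im, Complex.one_re, Complex.one_im]
      linear_combination (1 - b^2) * hre
    rw [Complex.norm_def, Complex.norm_def, h1]
  have h1 : HasDerivAt (fun z : ℂ => (z + (b:ℂ))/((b:ℂ)*z+1))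
      ((1 - (b:ℂ)^2)/((b:ℂ)*R+1)^2) R := by
    have h := ((hasDerivAt_id R).add_const (b:ℂ)).div
      (((hasDerivAt_id R).const_mul (b:ℂ)).add_const 1) hden
    have e : (fun z : ℂ => (z + (b:ℂ))/((b:ℂ)*z+1)) =
        ((fun x => id x + (b:ℂ)) / fun x => (b:ℂ) * id x + 1) := by
      funext z; simp
    rw [e]
    refine h.congr_deriv ?_
    simp only [id]
    ring
  have hD : HasDerivAt (fIsing d ξ (b:ℂ))
      (ξ * ((d:ℂ) * ((R + (b:ℂ))/((b:ℂ)*R+1))^(d-1) * ((1 - (b:ℂ)^2)/((b:ℂ)*R+1)^2))) R :=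
    (h1.pow d).const_mul ξ
  have habsne : ‖(b:ℂ)*R+1‖ ≠ 0 := norm_ne_zero_iff.mpr hden
  rw [hD.deriv]
  have e1 : ‖((R+(b:ℂ))/((b:ℂ)*R+1))^(d-1)‖ = 1 := by
    rw [norm_pow, norm_div, habs, div_self habsne, one_pow]
  have e2 : ‖(b:ℂ)*R+1‖^2 = 1 + b^2 + 2*b*R.re := by
    rw [Complex.sq_norm, Complex.normSq_apply]
    simp only [Complex.add_re, Complex.add_im, Complex.mul_re, Complex.mul_im,
      Complex.ofReal_re, Complex.ofReal_im, Complex.one_re, Complex.one_im]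
    linear_combination b^2 * hre
  have e4 : ‖(1 - (b:ℂ)^2)‖ = |1 - b^2| := by
    rw [show (1 - (b:ℂ)^2) = ((1 - b^2 : ℝ) : ℂ) by push_cast; ring, Complex.norm_real, Real.norm_eq_abs]
  simp only [norm_mul, norm_pow, norm_div, hξ, habs, div_self habsne, one_pow, e4]
  rw [e2]
  simp [Complex.norm_natCast]
  ring

set_option maxHeartbeats 1600000 in
/-- Lemma 3.5: expansion trichotomy of `|f'_{ξ,b}|` on the unit circle, with
`b_c = (d-1)/(d+1)` and `1/b_c = (d+1)/(d-1)`. -/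
theorem fIsing_expansion_trichotomy (d : ℕ) (hd : 2 ≤ d) (ξ : ℂ) (hξ : ‖ξ‖ = 1)
    (b : ℝ) (hb₀ : 0 < b) (hb₁ : b ≠ 1) :
    ((b < ((d : ℝ) - 1) / ((d : ℝ) + 1) ∨ ((d : ℝ) + 1) / ((d : ℝ) - 1) < b) →
      ∃ κ : ℝ, 1 < κ ∧ ∀ ξ' : ℂ, ‖ξ'‖ = 1 → ∀ R : ℂ, ‖R‖ = 1 →
        κ ≤ ‖(deriv (fIsing d ξ' (b : ℂ)) R)‖) ∧
    ((b = ((d : ℝ) - 1) / ((d : ℝ) + 1) ∨ b = ((d : ℝ) + 1) / ((d : ℝ) - 1)) →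
      (∀ R : ℂ, ‖R‖ = 1 → 1 ≤ ‖(deriv (fIsing d ξ (b : ℂ)) R)‖) ∧
      (∀ R : ℂ, ‖R‖ = 1 →
        (‖(deriv (fIsing d ξ (b : ℂ)) R)‖ = 1 ↔ R = 1))) ∧
    ((((d : ℝ) - 1) / ((d : ℝ) + 1) < b ∧ b < ((d : ℝ) + 1) / ((d : ℝ) - 1)) →
      ‖(deriv (fIsing d ξ (b : ℂ)) 1)‖ = (d : ℝ) * |1 - b| / (1 + b) ∧
      (d : ℝ) * |1 - b| / (1 + b) < 1) ∧
    (∀ ξ' : ℂ, ‖ξ'‖ = 1 → ∀ R : ℂ, ‖R‖ = 1 →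
      ‖(deriv (fIsing d ξ' (b : ℂ)) R)‖ =
        ‖(deriv (fIsing d ξ (b : ℂ)) R)‖) ∧
    (∀ R S : ℂ, ‖R‖ = 1 → ‖S‖ = 1 →
      |Complex.arg R| < |Complex.arg S| →
      ‖(deriv (fIsing d ξ (b : ℂ)) R)‖ <
        ‖(deriv (fIsing d ξ (b : ℂ)) S)‖) := by
  have key := abs_deriv_fIsing d b hb₀ hb₁
  have hd1 : (0:ℝ) < (d:ℝ) - 1 := by
    have : (2:ℝ) ≤ (d:ℝ) := by exact_mod_cast hd
    linarith
  have hd2 : (0:ℝ) < (d:ℝ) + 1 := by linarith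
  have hdR : (2:ℝ) ≤ (d:ℝ) := by exact_mod_cast hd
  have hb2 : (1:ℝ) - b^2 ≠ 0 := by
    intro h
    rcases lt_or_gt_of_ne hb₁ with h1 | h1 <;> nlinarith
  have hC : 0 < (d:ℝ) * |1 - b^2| := by
    apply mul_pos (by linarith) (abs_pos.mpr hb2)
  -- bounds on R.re
  have hre_bd : ∀ R : ℂ, ‖R‖ = 1 → -1 ≤ R.re ∧ R.re ≤ 1 := by
    intro R hR
    have h := Complex.abs_re_le_norm R
    rw [hR] at h
    exact abs_le.mp h
  have hdenpos : ∀ R : ℂ, ‖R‖ = 1 → 0 < 1 + b^2 + 2*b*R.re := by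
    intro R hR
    obtain ⟨h1, h2⟩ := hre_bd R hR
    rcases lt_or_gt_of_ne hb₁ with h3 | h3 <;> nlinarith
  have hdenle : ∀ R : ℂ, ‖R‖ = 1 → 1 + b^2 + 2*b*R.re ≤ (1+b)^2 := by
    intro R hR
    obtain ⟨h1, h2⟩ := hre_bd R hR
    nlinarith
  refine ⟨?_, ?_, ?_, ?_, ?_⟩
  · -- part (i)
    intro hcase
    refine ⟨(d:ℝ) * |1 - b^2| / (1+b)^2, ?_, ?_⟩
    · rcases hcase with h | h
      · have hblt : b < 1 := by
          have : ((d:ℝ) - 1) / ((d:ℝ) + 1) < 1 := by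
            rw [div_lt_one hd2]; linarith
          linarith
        have h' : b * ((d:ℝ) + 1) < (d:ℝ) - 1 := by
          rwa [lt_div_iff₀ hd2] at h
        rw [abs_of_pos (by nlinarith), lt_div_iff₀ (by positivity)]
        nlinarith
      · have hblt : 1 < b := by
          have : (1:ℝ) < ((d:ℝ) + 1) / ((d:ℝ) - 1) := by
            rw [lt_div_iff₀ hd1]; linarith
          linarith
        have h' : (d:ℝ) + 1 < b * ((d:ℝ) - 1) := by
          rwa [div_lt_iff₀ hd1] at h
        rw [abs_of_neg (by nlinarith), lt_div_iff₀ (by positivity)]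
        nlinarith
    · intro ξ' hξ' R hR
      rw [key ξ' R hξ' hR]
      gcongr
      · exact hdenpos R hR
      · exact hdenle R hR
  · -- part (ii)
    intro hcase
    have hCval : (d:ℝ) * |1 - b^2| = (1+b)^2 := by
      rcases hcase with h | h
      · have hblt : b < 1 := by
          have : ((d:ℝ) - 1) / ((d:ℝ) + 1) < 1 := by
            rw [div_lt_one hd2]; linarith
          linarith
        rw [abs_of_pos (by nlinarith)]
        subst h
        field_simp
        ring
      · have hblt : 1 < b := by
          have : (1:ℝ) < ((d:ℝ) + 1) / ((d:ℝ) - 1) := by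
            rw [lt_div_iff₀ hd1]; linarith
          linarith
        rw [abs_of_neg (by nlinarith)]
        subst h
        field_simp
        ring
    constructor
    · intro R hR
      rw [key ξ R hξ hR, hCval, le_div_iff₀ (hdenpos R hR), one_mul]
      exact hdenle R hR
    · intro R hR
      rw [key ξ R hξ hR, hCval]
      constructor
      · intro h
        have hden := hdenpos R hR
        have h2 : (1+b)^2 = 1 + b^2 + 2*b*R.re := by
          rw [div_eq_one_iff_eq hden.ne'] at h
          linarith
        have hre1 : R.re = 1 := by nlinarith
        have hnR : Complex.normSq R = 1 := by rw [← Complex.sq_norm, hR]; norm_num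
        have him : R.im = 0 := by
          have : R.re * R.re + R.im * R.im = 1 := by simpa [Complex.normSq_apply] using hnR
          nlinarith
        exact Complex.ext (by simp [hre1]) (by simp [him])
      · intro h
        subst h
        simp only [Complex.one_re]
        rw [div_eq_one_iff_eq (by simp at hdenpos ⊢; nlinarith [hdenpos 1 (by simp)])]
        ring
  · -- part (iii)
    intro ⟨h1, h2⟩
    have e0 : ‖deriv (fIsing d ξ (b:ℂ)) 1‖ = (d:ℝ) * |1 - b| / (1+b) := by
      rw [key ξ 1 hξ (by simp)]
      simp only [Complex.one_re]
      rw [div_eq_div_iff (ne_of_gt (by positivity : (0:ℝ) < 1 + b^2 + 2*b*1))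
        (ne_of_gt (by linarith : (0:ℝ) < 1 + b))]
      have habs2 : |1 - b^2| = |1-b| * (1+b) := by
        rw [show (1:ℝ) - b^2 = (1-b)*(1+b) by ring, abs_mul,
          abs_of_pos (show (0:ℝ) < 1 + b by linarith)]
      rw [habs2]
      ring
    refine ⟨e0, ?_⟩
    rw [div_lt_one (show (0:ℝ) < 1 + b by linarith)]
    rcases lt_or_gt_of_ne hb₁ with h3 | h3
    · rw [abs_of_pos (show (0:ℝ) < 1 - b by linarith)]
      have h' : (d:ℝ) - 1 < b * ((d:ℝ) + 1) := by rwa [div_lt_iff₀ hd2] at h1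
      nlinarith
    · rw [abs_of_neg (show (1:ℝ) - b < 0 by linarith)]
      have h' : b * ((d:ℝ) - 1) < (d:ℝ) + 1 := by rwa [lt_div_iff₀ hd1] at h2
      nlinarith
  · -- part (iv)
    intro ξ' hξ' R hR
    rw [key ξ' R hξ' hR, key ξ R hξ hR]
  · -- part (v)
    intro R S hR hS harg
    rw [key ξ R hξ hR, key ξ S hξ hS]
    have hRne : R ≠ 0 := by intro h; rw [h] at hR; simp at hR
    have hSne : S ≠ 0 := by intro h; rw [h] at hS; simp at hS
    have hcosR : Real.cos (Complex.arg R) = R.re := by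
      rw [Complex.cos_arg hRne, hR, div_one]
    have hcosS : Real.cos (Complex.arg S) = S.re := by
      rw [Complex.cos_arg hSne, hS, div_one]
    have hlt : S.re < R.re := by
      have h := Real.cos_lt_cos_of_nonneg_of_le_pi (abs_nonneg (Complex.arg R))
        (Complex.abs_arg_le_pi S) harg
      rwa [Real.cos_abs, Real.cos_abs, hcosR, hcosS] at h
    have hdlt : 1 + b^2 + 2*b*S.re < 1 + b^2 + 2*b*R.re := by nlinarith
    exact div_lt_div_of_pos_left hC (hdenpos S hS) hdlt
end

section
/- (Lemma 3.8(i), parabolic parameter in the ferromagnetic regime) Let d ≥ 2 be an integer and let b ∈ ((d−1)/(d+1), 1). Then there exists a unique θ ∈ (0,π) such that for ξ = e^{iθ} the map f_{ξ,b} has a fixed point R ∈ ∂𝔻 with |f'_{ξ,b}(R)| = 1; moreover, for this θ and ξ = e^{iθ}, any fixed point R ∈ ∂𝔻 of f_{ξ,b} with |f'_{ξ,b}(R)| = 1 satisfies f'_{ξ,b}(R) = 1 and is a solution of the quadratic equation R² + ((d(b²−1)+(1+b²))/b)·R + 1 = 0. The same θ works for ξ = e^{−iθ}, with the fixed point replaced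 by its complex conjugate. -/
/-! ### Auxiliary real-analysis lemmas -/

lemma arctanAux_lt {x : ℝ} (hx : 0 < x) : Real.arctan x < x := by
  have h := strictMonoOn_of_deriv_pos (convex_Ici (0:ℝ))
    (f := fun y => y - Real.arctan y)
    ((continuous_id.sub Real.continuous_arctan).continuousOn) ?_
  · have := h (Set.self_mem_Ici) (Set.mem_Ici.2 hx.le) hx
    simp [Real.arctan_zero] at this
    linarith
  · intro y hy
    rw [interior_Ici] at hy
    have hd : deriv (fun y : ℝ => y - Real.arctan y) y = 1 - 1/(1+y^2) := by
      have := ((hasDerivAt_id y).sub (Real.hasDerivAt_arctan y)).deriv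
      exact this
    rw [hd]
    have h1 : (0:ℝ) < 1 + y^2 := by positivity
    rw [sub_pos, div_lt_one h1]
    nlinarith [Set.mem_Ioi.1 hy]

lemma arctanAux_ge {x : ℝ} (hx : 0 ≤ x) : x - x^3/3 ≤ Real.arctan x := by
  have h := monotoneOn_of_deriv_nonneg (convex_Ici (0:ℝ))
    (f := fun y => Real.arctan y - (y - y^3/3))
    ((Real.continuous_arctan.sub (by continuity)).continuousOn) ?_ ?_
  · have := h (Set.self_mem_Ici) (Set.mem_Ici.2 hx) hx
    simp [Real.arctan_zero] at this
    linarith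
  · intro y hy
    exact ((Real.differentiable_arctan.sub (by fun_prop)) y).differentiableWithinAt
  · intro y hy
    have hd : deriv (fun y : ℝ => Real.arctan y - (y - y^3/3)) y = 1/(1+y^2) - (1 - y^2) := by
      have h2 : HasDerivAt (fun y : ℝ => y - y^3/3) (1 - 3*y^2/3) y := by
        refine ((hasDerivAt_id' y).sub ((hasDerivAt_pow 3 y).div_const 3)).congr_deriv ?_
        push_cast; ring
      have := ((Real.hasDerivAt_arctan y).sub h2).deriv
      rw [show (fun y : ℝ => Real.arctan y - (y - y^3/3)) = Real.arctan - (fun y => y - y^3/3) from rfl, this]; ring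
    rw [hd]
    have h1 : (0:ℝ) < 1 + y^2 := by positivity
    rw [sub_nonneg, le_div_iff₀ h1]
    nlinarith [sq_nonneg (y^2)]

lemma theta_pos_aux (d : ℕ) (hd : 2 ≤ d) (l t : ℝ) (hl0 : 0 < l) (hld : (d:ℝ) * l < 1)
    (ht : 0 < t) (ht2 : t^2 * (l * ((d:ℝ) - l)) = 1 - (d:ℝ) * l) :
    (d:ℝ) * Real.arctan (l * t) < Real.arctan t := by
  have hd2 : (2:ℝ) ≤ (d:ℝ) := by exact_mod_cast hd
  have hl2 : l < 1/2 := by nlinarith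
  have hdl2 : ((d:ℝ) - l) > 0 := by nlinarith
  have hlt : 0 < l * t := mul_pos hl0 ht
  have key : (d:ℝ) * (l * t) ≤ Real.arctan t := by
    rcases le_or_gt 1 t with h1 | h1
    · have hpi : Real.pi / 4 ≤ Real.arctan t := by
        rw [← Real.arctan_one]
        exact Real.arctan_strictMono.monotone h1
      have h2 : ((d:ℝ)*(l*t))^2 * ((d:ℝ) - l) = (d:ℝ)^2 * l * (1 - (d:ℝ)*l) := by
        linear_combination ((d:ℝ)^2*l) * ht2
      have hsq : ((d:ℝ)*(l*t))^2 * ((d:ℝ)-l) < 9/16 * ((d:ℝ)-l) := by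
        rw [h2]
        nlinarith [mul_nonneg (by linarith : (0:ℝ) ≤ (d:ℝ)/4) (sq_nonneg (2*(d:ℝ)*l-1)),
          mul_pos hl0 hl0]
      have hsq' : ((d:ℝ)*(l*t))^2 < 9/16 := (mul_lt_mul_iff_of_pos_right hdl2).mp hsq
      have hlt34 : (d:ℝ)*(l*t) < 3/4 := by nlinarith [sq_nonneg ((d:ℝ)*(l*t) - 3/4)]
      have hpi3 : (3:ℝ) < Real.pi := Real.pi_gt_three
      linarith
    · have ht1 : t^2 < 1 := by nlinarith
      have h4 : 1 - (d:ℝ)*l < l*((d:ℝ) - l) := by nlinarith [mul_pos hl0 hdl2]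
      have h3 : 1/3 ≤ l * ((d:ℝ) - l) := by nlinarith [mul_pos hl0 hl0, sq_nonneg l]
      have hcub := arctanAux_ge ht.le
      have h5 : (d:ℝ) * l ≤ 1 - t^2/3 := by
        nlinarith [mul_le_mul_of_nonneg_left h3 (sq_nonneg t)]
      nlinarith [mul_le_mul_of_nonneg_left h5 ht.le]
  have harc : Real.arctan (l*t) < l*t := arctanAux_lt hlt
  calc (d:ℝ) * Real.arctan (l*t) < (d:ℝ) * (l*t) :=
        mul_lt_mul_of_pos_left harc (by linarith)
    _ ≤ Real.arctan t := key

/-! ### Auxiliary complex lemmas -/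

lemma one_add_mul_I_ne (s : ℝ) : (1:ℂ) + (s:ℂ) * Complex.I ≠ 0 := by
  intro h
  have := congrArg Complex.re h
  simp at this

lemma one_sub_mul_I_ne (s : ℝ) : (1:ℂ) - (s:ℂ) * Complex.I ≠ 0 := by
  intro h
  have := congrArg Complex.re h
  simp at this

lemma normSq_one_add_mul_I (s : ℝ) : Complex.normSq (1 + (s:ℂ) * Complex.I) = 1 + s^2 := by
  simp [Complex.normSq_apply]
  ring

lemma normSq_one_sub_mul_I (s : ℝ) : Complex.normSq (1 - (s:ℂ) * Complex.I) = 1 + s^2 := by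
  simp [Complex.normSq_apply]
  ring

lemma circ_abs (s : ℝ) :
    ‖(1 + (s:ℂ) * Complex.I) / (1 - (s:ℂ) * Complex.I)‖ = 1 := by
  rw [norm_div, Complex.norm_def, Complex.norm_def, normSq_one_add_mul_I,
    normSq_one_sub_mul_I, div_self]
  positivity

lemma expArctan (s : ℝ) :
    Complex.exp (((2 * Real.arctan s : ℝ) : ℂ) * Complex.I)
      = (1 + (s:ℂ) * Complex.I) / (1 - (s:ℂ) * Complex.I) := by
  have h1 : (0:ℝ) < 1 + s^2 := by positivity
  have hc : Real.cos (2 * Real.arctan s) = (1 - s^2) / (1 + s^2) := by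
    rw [Real.cos_two_mul, Real.cos_arctan]
    rw [div_pow, one_pow, Real.sq_sqrt h1.le]
    field_simp
    ring
  have hs : Real.sin (2 * Real.arctan s) = 2*s / (1 + s^2) := by
    rw [Real.sin_two_mul, Real.sin_arctan, Real.cos_arctan]
    have hq : Real.sqrt (1+s^2) * Real.sqrt (1+s^2) = 1 + s^2 := Real.mul_self_sqrt h1.le
    field_simp
    rw [Real.sq_sqrt h1.le]
  have hne : (1:ℂ) - (s:ℂ)*Complex.I ≠ 0 := one_sub_mul_I_ne s
  have h2 : ((1:ℝ) + s^2 : ℝ) ≠ 0 := h1.ne'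
  rw [Complex.exp_mul_I, ← Complex.ofReal_cos, ← Complex.ofReal_sin, hc, hs]
  have h3 : ((1:ℂ) + (s:ℂ)^2) ≠ 0 := by
    have := Complex.ofReal_ne_zero.mpr h2
    push_cast at this
    exact this
  push_cast
  field_simp
  linear_combination (-2*(s:ℂ)^2) * Complex.I_sq

lemma exp_theta_inj {x y : ℝ} (hx : x ∈ Set.Ioo (-Real.pi) Real.pi)
    (hy : y ∈ Set.Ioo (-Real.pi) Real.pi)
    (h : Complex.exp ((x:ℂ) * Complex.I) = Complex.exp ((y:ℂ) * Complex.I)) : x = y := by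
  rw [Complex.exp_eq_exp_iff_exists_int] at h
  obtain ⟨n, hn⟩ := h
  have him := congrArg Complex.im hn
  simp [Complex.add_im, Complex.mul_im] at him
  have hπ := Real.pi_pos
  have hn0 : n = 0 := by
    have h1 : (-1:ℝ) < (n:ℝ) := by nlinarith [hx.1, hx.2, hy.1, hy.2]
    have h2 : (n:ℝ) < 1 := by nlinarith [hx.1, hx.2, hy.1, hy.2]
    have h1' : (-1:ℤ) < n := by exact_mod_cast h1
    have h2' : n < (1:ℤ) := by exact_mod_cast h2
    omega
  rw [hn0] at him
  simpa using him

/-! ### Basic facts about `fIsing` -/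

lemma hasDerivAt_fIsing (d : ℕ) (ξ b R : ℂ) (h : b * R + 1 ≠ 0) :
    HasDerivAt (fIsing d ξ b)
      (ξ * (d * ((R + b) / (b * R + 1)) ^ (d - 1) * ((1 - b ^ 2) / (b * R + 1) ^ 2))) R := by
  have h1 : HasDerivAt (fun R : ℂ => (R + b) / (b * R + 1))
      ((1 * (b * R + 1) - (R + b) * b) / (b * R + 1) ^ 2) R := by
    exact HasDerivAt.div ((hasDerivAt_id R).add_const b)
      (by simpa using ((hasDerivAt_id R).const_mul b).add_const 1) h
  have h2 := (h1.pow d).const_mul ξ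
  refine h2.congr_deriv ?_
  ring

lemma ne_zero_add_b {b : ℝ} (hb0 : 0 < b) (hb1 : b < 1) {R : ℂ} (hR : ‖R‖ = 1) :
    R + (b : ℂ) ≠ 0 := by
  intro h
  have : R = -(b:ℂ) := by linear_combination h
  rw [this] at hR
  simp [abs_of_pos hb0] at hR
  linarith

lemma ne_zero_bR {b : ℝ} (hb0 : 0 < b) (hb1 : b < 1) {R : ℂ} (hR : ‖R‖ = 1) :
    (b : ℂ) * R + 1 ≠ 0 := by
  intro h
  have : (b:ℂ) * R = -1 := by linear_combination h
  have := congrArg (‖·‖) this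
  simp only [norm_mul, hR] at this
  simp [abs_of_pos hb0] at this
  linarith

lemma circle_normSq_mul {b : ℝ} {R : ℂ} (hR : ‖R‖ = 1) :
    (R + (b:ℂ)) * ((b:ℂ) * R + 1) = R * ((Complex.normSq (R + (b:ℂ)) : ℝ) : ℂ) := by
  have hcc : R * (starRingEnd ℂ) R = 1 := by
    rw [Complex.mul_conj]
    norm_cast
    rw [← Complex.sq_norm, hR]; norm_num
  have h1 : ((Complex.normSq (R + (b:ℂ)) : ℝ) : ℂ) = (R + b) * ((starRingEnd ℂ) R + b) := by
    rw [← Complex.mul_conj]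
    simp [map_add, Complex.conj_ofReal]
  rw [h1]
  linear_combination (-(R + (b:ℂ))) * hcc

lemma deriv_fIsing_fixed (d : ℕ) (hd : 2 ≤ d) {b : ℝ} (hb0 : 0 < b) (hb1 : b < 1)
    {ξ R : ℂ} (hR : ‖R‖ = 1) (hfix : fIsing d ξ (b : ℂ) R = R) :
    deriv (fIsing d ξ (b : ℂ)) R
      = ((d * (1 - b ^ 2) / Complex.normSq (R + b) : ℝ) : ℂ) := by
  have hRb := ne_zero_add_b hb0 hb1 hR
  have hbR := ne_zero_bR hb0 hb1 hR
  have hs := circle_normSq_mul (b := b) hR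
  have hu : (R + b) / ((b:ℂ) * R + 1) ≠ 0 := div_ne_zero hRb hbR
  have hder := (hasDerivAt_fIsing d ξ (b:ℂ) R hbR).deriv
  rw [hder]
  have hpow : ((R + b) / ((b:ℂ) * R + 1)) ^ (d - 1)
      = ((R + b) / ((b:ℂ) * R + 1)) ^ d / ((R + b) / ((b:ℂ) * R + 1)) := by
    rw [eq_div_iff hu, ← pow_succ]
    congr 1
    omega
  rw [hpow]
  have hfix' : ξ * ((R + b) / ((b:ℂ) * R + 1)) ^ d = R := hfix
  have hσ : ((Complex.normSq (R + (b:ℂ)) : ℝ) : ℂ) ≠ 0 := by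
    simp only [ne_eq, Complex.ofReal_eq_zero]
    exact fun h => hRb (Complex.normSq_eq_zero.mp h)
  have hR0 : R ≠ 0 := by
    intro h; rw [h] at hR; simp at hR
  obtain ⟨u, hu_def⟩ : ∃ u : ℂ, (R + (b:ℂ)) / ((b:ℂ) * R + 1) = u := ⟨_, rfl⟩
  rw [hu_def] at hfix' hu
  rw [hu_def]
  have e1 : u * ((b:ℂ)*R+1)^2 = R * ((Complex.normSq (R + (b:ℂ)) : ℝ) : ℂ) := by
    rw [← hu_def, div_mul_eq_mul_div, div_eq_iff hbR]
    linear_combination ((b:ℂ)*R+1) * hs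
  calc ξ * (↑d * (u ^ d / u) * ((1 - (b:ℂ) ^ 2) / ((b:ℂ) * R + 1) ^ 2))
      = (ξ * u ^ d) * ((d:ℂ) * (1 - (b:ℂ)^2) / (u * ((b:ℂ)*R+1)^2)) := by
        field_simp
    _ = R * ((d:ℂ) * (1 - (b:ℂ)^2) / (R * ((Complex.normSq (R + (b:ℂ)) : ℝ) : ℂ))) := by
        rw [hfix', e1]
    _ = ((d * (1 - b ^ 2) / Complex.normSq (R + (b:ℂ)) : ℝ) : ℂ) := by
        push_cast
        field_simp

lemma fIsing_conj (d : ℕ) (ξ : ℂ) (b : ℝ) (R : ℂ) :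
    fIsing d ((starRingEnd ℂ) ξ) (b:ℂ) ((starRingEnd ℂ) R)
      = (starRingEnd ℂ) (fIsing d ξ (b:ℂ) R) := by
  simp only [fIsing, map_mul, map_pow, map_div₀, map_add, Complex.conj_ofReal, map_one]

lemma conj_bR_ne {b : ℝ} {R : ℂ} (h : (b:ℂ) * R + 1 ≠ 0) :
    (b:ℂ) * (starRingEnd ℂ) R + 1 ≠ 0 := by
  intro hh
  apply h
  have := congrArg (starRingEnd ℂ) hh
  simpa [map_mul, map_add, Complex.conj_ofReal] using this

lemma deriv_fIsing_conj (d : ℕ) (ξ : ℂ) (b : ℝ) (R : ℂ) (h : (b:ℂ) * R + 1 ≠ 0) :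
    deriv (fIsing d ((starRingEnd ℂ) ξ) (b:ℂ)) ((starRingEnd ℂ) R)
      = (starRingEnd ℂ) (deriv (fIsing d ξ (b:ℂ)) R) := by
  rw [(hasDerivAt_fIsing d ξ (b:ℂ) R h).deriv,
    (hasDerivAt_fIsing d ((starRingEnd ℂ) ξ) (b:ℂ) ((starRingEnd ℂ) R) (conj_bR_ne h)).deriv]
  simp only [map_mul, map_pow, map_div₀, map_add, map_sub, map_one, Complex.conj_ofReal,
    map_natCast, map_ofNat]

lemma R_cases {b : ℝ} (hb0 : 0 < b) {v R : ℂ} (hv : ‖v‖ = 1)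
    (hR : ‖R‖ = 1)
    (h1 : Complex.normSq (R + (b:ℂ)) = Complex.normSq (v + (b:ℂ))) :
    R = v ∨ R = (starRingEnd ℂ) v := by
  have hnv : Complex.normSq v = 1 := by rw [Complex.normSq_eq_norm_sq, hv]; norm_num
  have hnR : Complex.normSq R = 1 := by rw [Complex.normSq_eq_norm_sq, hR]; norm_num
  rw [Complex.normSq_add, Complex.normSq_add, hnv, hnR] at h1
  simp only [Complex.conj_ofReal, Complex.mul_re, Complex.ofReal_re, Complex.ofReal_im,
    mul_zero, sub_zero, Complex.normSq_ofReal] at h1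
  have hre : R.re = v.re := by
    have : 2 * (R.re * b) = 2 * (v.re * b) := by linarith
    have hb := hb0.ne'
    field_simp at this
    tauto
  have h2 : R.im^2 = v.im^2 := by
    have e1 : R.re^2 + R.im^2 = 1 := by
      have := hnR; rw [Complex.normSq_apply] at this; nlinarith
    have e2 : v.re^2 + v.im^2 = 1 := by
      have := hnv; rw [Complex.normSq_apply] at this; nlinarith
    rw [hre] at e1; linarith
  have h3 : R.im = v.im ∨ R.im = -v.im := by
    rcases mul_self_eq_mul_self_iff (a := R.im) (b := v.im) |>.mp (by nlinarith) with h | h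
    · exact Or.inl h
    · exact Or.inr h
  rcases h3 with h | h
  · left; exact Complex.ext hre h
  · right
    exact Complex.ext (by simpa [Complex.conj_re] using hre) (by simpa [Complex.conj_im] using h)

lemma fixed_char (d : ℕ) (hd : 2 ≤ d) {b : ℝ} (hb0 : 0 < b) (hb1 : b < 1)
    {ξ R : ℂ} (hR : ‖R‖ = 1) (hfix : fIsing d ξ (b:ℂ) R = R)
    (habs : ‖deriv (fIsing d ξ (b:ℂ)) R‖ = 1) :
    deriv (fIsing d ξ (b:ℂ)) R = 1 ∧ Complex.normSq (R + (b:ℂ)) = d * (1 - b^2) := by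
  have hden := deriv_fIsing_fixed d hd hb0 hb1 hR hfix
  have hσpos : 0 < Complex.normSq (R + (b:ℂ)) :=
    Complex.normSq_pos.mpr (ne_zero_add_b hb0 hb1 hR)
  have hdpos : (0:ℝ) < d * (1 - b^2) := by
    have h2 : (2:ℝ) ≤ (d:ℝ) := by exact_mod_cast hd
    have hb2 : b^2 < 1 := by nlinarith
    nlinarith
  rw [hden, Complex.norm_real, Real.norm_eq_abs, abs_of_pos (div_pos hdpos hσpos)] at habs
  have hσ : Complex.normSq (R + (b:ℂ)) = d * (1 - b^2) := by
    field_simp at habs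
    linarith
  constructor
  · rw [hden, hσ]
    rw [div_self hdpos.ne']
    norm_num
  · exact hσ

lemma quad_of (d : ℕ) {b : ℝ} (hb0 : 0 < b) {R : ℂ} (hR : ‖R‖ = 1)
    (hσ : Complex.normSq (R + (b:ℂ)) = d * (1 - b^2)) :
    R ^ 2 + (((d : ℂ) * ((b : ℂ) ^ 2 - 1) + (1 + (b : ℂ) ^ 2)) / (b : ℂ)) * R + 1 = 0 := by
  have hs := circle_normSq_mul (b := b) hR
  rw [hσ] at hs
  push_cast at hs
  have hbC : (b:ℂ) ≠ 0 := Complex.ofReal_ne_zero.mpr hb0.ne'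
  have key : (b:ℂ) * (R ^ 2 + (((d : ℂ) * ((b : ℂ) ^ 2 - 1) + (1 + (b : ℂ) ^ 2)) / (b : ℂ)) * R + 1)
      = 0 := by
    field_simp
    linear_combination hs
  rcases mul_eq_zero.mp key with h | h
  · exact absurd h hbC
  · exact h

/-- Lemma 3.8(i): for `b ∈ ((d-1)/(d+1), 1)` there is a unique `θ ∈ (0,π)` for which
`f_{e^{iθ},b}` has a fixed point on the unit circle whose derivative has modulus 1;
any such fixed point has derivative exactly 1 and satisfies the stated quadratic
equation, and the same `θ` works for `e^{-iθ}` with the conjugate fixed point. -/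
theorem fIsing_parabolic_parameter_ferro (d : ℕ) (hd : 2 ≤ d) (b : ℝ)
    (hb₁ : ((d : ℝ) - 1) / ((d : ℝ) + 1) < b) (hb₂ : b < 1) :
    ∃ θ : ℝ, θ ∈ Set.Ioo 0 Real.pi ∧
      (∃ R : ℂ, ‖R‖ = 1 ∧
        fIsing d (Complex.exp (θ * Complex.I)) (b : ℂ) R = R ∧
        ‖deriv (fIsing d (Complex.exp (θ * Complex.I)) (b : ℂ)) R‖ = 1) ∧
      (∀ θ' ∈ Set.Ioo 0 Real.pi,
        (∃ R : ℂ, ‖R‖ = 1 ∧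
          fIsing d (Complex.exp (θ' * Complex.I)) (b : ℂ) R = R ∧
          ‖deriv (fIsing d (Complex.exp (θ' * Complex.I)) (b : ℂ)) R‖ = 1) →
        θ' = θ) ∧
      (∀ R : ℂ, ‖R‖ = 1 →
        fIsing d (Complex.exp (θ * Complex.I)) (b : ℂ) R = R →
        ‖deriv (fIsing d (Complex.exp (θ * Complex.I)) (b : ℂ)) R‖ = 1 →
          deriv (fIsing d (Complex.exp (θ * Complex.I)) (b : ℂ)) R = 1 ∧
          R ^ 2 + (((d : ℂ) * ((b : ℂ) ^ 2 - 1) + (1 + (b : ℂ) ^ 2)) / (b : ℂ)) * R + 1 = 0 ∧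
          fIsing d (Complex.exp (-(θ * Complex.I))) (b : ℂ) (starRingEnd ℂ R) =
            starRingEnd ℂ R ∧
          ‖deriv (fIsing d (Complex.exp (-(θ * Complex.I))) (b : ℂ))
            (starRingEnd ℂ R)‖ = 1) := by
  have hdR : (2:ℝ) ≤ (d:ℝ) := by exact_mod_cast hd
  have hd1 : (0:ℝ) < (d:ℝ) + 1 := by linarith
  have hb0 : 0 < b := by
    have : (0:ℝ) < ((d:ℝ) - 1) / ((d:ℝ) + 1) := div_pos (by linarith) hd1
    linarith
  have h1b : (0:ℝ) < 1 + b := by linarith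
  set l : ℝ := (1 - b) / (1 + b) with hl_def
  have hl0 : 0 < l := div_pos (by linarith) h1b
  have hlR : l * (1 + b) = 1 - b := by
    rw [hl_def]; field_simp
  have hld : (d:ℝ) * l < 1 := by
    rw [div_lt_iff₀ hd1] at hb₁
    rw [hl_def, ← mul_div_assoc, div_lt_one h1b]
    nlinarith
  have hdl : 0 < (d:ℝ) - l := by nlinarith
  set t : ℝ := Real.sqrt ((1 - d*l) / (l * ((d:ℝ) - l))) with ht_def
  have htnum : 0 < (1 - (d:ℝ)*l) / (l * ((d:ℝ) - l)) :=
    div_pos (by linarith) (mul_pos hl0 hdl)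
  have htpos : 0 < t := Real.sqrt_pos.mpr htnum
  have ht2' : t^2 = (1 - (d:ℝ)*l) / (l * ((d:ℝ) - l)) := Real.sq_sqrt htnum.le
  have ht2 : t^2 * (l * ((d:ℝ) - l)) = 1 - (d:ℝ)*l := by
    rw [ht2']
    field_simp
  set θ : ℝ := 2 * Real.arctan t - 2 * (d:ℝ) * Real.arctan (l*t) with hθ_def
  have harcpos : 0 < Real.arctan (l*t) := by
    rw [← Real.arctan_zero]
    exact Real.arctan_strictMono (mul_pos hl0 htpos)
  have hθmem : θ ∈ Set.Ioo 0 Real.pi := by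
    constructor
    · have := theta_pos_aux d hd l t hl0 hld htpos ht2
      rw [hθ_def]; linarith
    · have h1 := Real.arctan_lt_pi_div_two t
      have h2 : 0 < 2 * (d:ℝ) * Real.arctan (l*t) := by positivity
      rw [hθ_def]; linarith
  -- complex objects
  set A : ℂ := (1 + (t:ℂ) * Complex.I) / (1 - (t:ℂ) * Complex.I) with hA_def
  set B : ℂ := (1 + ((l*t:ℝ):ℂ) * Complex.I) / (1 - ((l*t:ℝ):ℂ) * Complex.I) with hB_def
  have habsA : ‖A‖ = 1 := circ_abs t
  have habsB : ‖B‖ = 1 := circ_abs (l*t)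
  have hBne : B ≠ 0 := by
    rw [hB_def]; exact div_ne_zero (one_add_mul_I_ne _) (one_sub_mul_I_ne _)
  have hbA1 : (b:ℂ) * A + 1 ≠ 0 := ne_zero_bR hb0 hb₂ habsA
  have h1bC : (1:ℂ) + (b:ℂ) ≠ 0 := by
    have := Complex.ofReal_ne_zero.mpr h1b.ne'
    push_cast at this
    exact this
  have hlC : ((l:ℝ):ℂ) * (1 + (b:ℂ)) = 1 - (b:ℂ) := by
    have := congrArg (fun x : ℝ => (x : ℂ)) hlR
    push_cast at this
    exact this
  have e2 : A + (b:ℂ) = ((1+(b:ℂ)) * (1 + ((l*t:ℝ):ℂ) * Complex.I)) / (1 - (t:ℂ)*Complex.I) := by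
    rw [eq_div_iff (one_sub_mul_I_ne t), add_mul, hA_def,
      div_mul_cancel₀ _ (one_sub_mul_I_ne t)]
    push_cast
    linear_combination (-(t:ℂ) * Complex.I) * hlC
  have e3 : (b:ℂ) * A + 1 = ((1+(b:ℂ)) * (1 - ((l*t:ℝ):ℂ) * Complex.I)) / (1 - (t:ℂ)*Complex.I) := by
    rw [eq_div_iff (one_sub_mul_I_ne t), add_mul, one_mul, hA_def, mul_assoc,
      div_mul_cancel₀ _ (one_sub_mul_I_ne t)]
    push_cast
    linear_combination ((t:ℂ) * Complex.I) * hlC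
  have hAB : (A + (b:ℂ)) / ((b:ℂ) * A + 1) = B := by
    rw [e2, e3, hB_def]
    rw [div_div_div_cancel_right₀ (one_sub_mul_I_ne t)]
    rw [mul_div_mul_left _ _ h1bC]
  have hexpθ : Complex.exp ((θ:ℂ) * Complex.I) * B ^ d = A := by
    have hθI : (θ:ℂ) * Complex.I
        = ((2 * Real.arctan t : ℝ):ℂ) * Complex.I
          - (d:ℂ) * (((2 * Real.arctan (l*t) : ℝ):ℂ) * Complex.I) := by
      rw [hθ_def]; push_cast; ring
    rw [hθI, Complex.exp_sub, Complex.exp_nat_mul, expArctan t, expArctan (l*t)]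
    rw [← hA_def, ← hB_def]
    exact div_mul_cancel₀ _ (pow_ne_zero d hBne)
  have hfixA : fIsing d (Complex.exp ((θ:ℂ) * Complex.I)) (b:ℂ) A = A := by
    rw [fIsing, hAB]
    exact hexpθ
  have hdpos : (0:ℝ) < d * (1 - b^2) := by
    have hb2 : b^2 < 1 := by nlinarith
    nlinarith
  -- normSq (A + b) = d (1 - b²)
  have ht2b : t^2 * ((1-b) * ((d:ℝ)*(1+b) - (1-b))) = (1+b)^2 - (d:ℝ)*(1-b^2) := by
    linear_combination ((1+b)^2) * ht2
      + (t^2*((1-b) + l*(1+b) - (d:ℝ)*(1+b)) - (d:ℝ)*(1+b)) * hlR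
  have hσA : Complex.normSq (A + (b:ℂ)) = d * (1 - b^2) := by
    rw [e2, map_div₀, map_mul, normSq_one_sub_mul_I, normSq_one_add_mul_I]
    rw [show (1:ℂ) + (b:ℂ) = ((1+b:ℝ):ℂ) by push_cast; ring, Complex.normSq_ofReal]
    rw [div_eq_iff (by positivity : (1:ℝ) + t^2 ≠ 0)]
    linear_combination (-1:ℝ) * ht2b + (t^2*(l*(1+b)+(1-b))) * hlR
  have hderA : ‖deriv (fIsing d (Complex.exp ((θ:ℂ) * Complex.I)) (b:ℂ)) A‖ = 1 := by
    rw [deriv_fIsing_fixed d hd hb0 hb₂ habsA hfixA, hσA, div_self hdpos.ne']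
    simp
  have hconjexp : Complex.exp (-((θ:ℂ) * Complex.I))
      = (starRingEnd ℂ) (Complex.exp ((θ:ℂ) * Complex.I)) := by
    rw [← Complex.exp_conj]
    congr 1
    simp [map_mul, Complex.conj_ofReal, Complex.conj_I]
  refine ⟨θ, hθmem, ⟨A, habsA, hfixA, hderA⟩, ?_, ?_⟩
  · rintro θ' hθ' ⟨R, hR, hfix', hder'⟩
    obtain ⟨_, hσ'⟩ := fixed_char d hd hb0 hb₂ hR hfix' hder'
    have hcase := R_cases hb0 habsA hR (by rw [hσ', hσA])
    have hmemθ : θ ∈ Set.Ioo (-Real.pi) Real.pi :=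
      ⟨by linarith [hθmem.1, Real.pi_pos], hθmem.2⟩
    have hmemθ' : θ' ∈ Set.Ioo (-Real.pi) Real.pi :=
      ⟨by linarith [hθ'.1, Real.pi_pos], hθ'.2⟩
    rcases hcase with rfl | hRA
    · -- R = A
      have h1 : Complex.exp ((θ':ℂ) * Complex.I) * B ^ d = A := by
        rw [← hAB]
        exact hfix'
      have h2 : Complex.exp ((θ':ℂ) * Complex.I) = Complex.exp ((θ:ℂ) * Complex.I) := by
        have := h1.trans hexpθ.symm
        exact mul_right_cancel₀ (pow_ne_zero d hBne) this
      exact exp_theta_inj hmemθ' hmemθ h2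
    · -- R = conj A : impossible
      exfalso
      rw [hRA] at hfix'
      have hfixc : fIsing d ((starRingEnd ℂ) (Complex.exp ((θ:ℂ) * Complex.I))) (b:ℂ)
          ((starRingEnd ℂ) A) = (starRingEnd ℂ) A := by
        rw [fIsing_conj, hfixA]
      have habsAc : ‖(starRingEnd ℂ) A‖ = 1 := by
        rw [Complex.norm_conj]; exact habsA
      have huc : ((starRingEnd ℂ) A + (b:ℂ)) / ((b:ℂ) * (starRingEnd ℂ) A + 1) ≠ 0 :=
        div_ne_zero (ne_zero_add_b hb0 hb₂ habsAc) (ne_zero_bR hb0 hb₂ habsAc)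
      have h2 : Complex.exp ((θ':ℂ) * Complex.I)
          = (starRingEnd ℂ) (Complex.exp ((θ:ℂ) * Complex.I)) := by
        have h3 := hfix'.trans hfixc.symm
        exact mul_right_cancel₀ (pow_ne_zero d huc) h3
      have h4 : Complex.exp ((θ':ℂ) * Complex.I) = Complex.exp (((-θ:ℝ):ℂ) * Complex.I) := by
        rw [h2, ← hconjexp]
        congr 1
        push_cast
        ring
      have h5 : θ' = -θ := exp_theta_inj hmemθ'
        ⟨by linarith [hθmem.2], by linarith [hθmem.1, Real.pi_pos]⟩ h4
      linarith [hθ'.1, hθmem.1]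
  · rintro R hR hfix' hder'
    obtain ⟨hder1, hσ'⟩ := fixed_char d hd hb0 hb₂ hR hfix' hder'
    have hbR := ne_zero_bR hb0 hb₂ hR
    refine ⟨hder1, quad_of d hb0 hR hσ', ?_, ?_⟩
    · rw [hconjexp, fIsing_conj, hfix']
    · rw [hconjexp, deriv_fIsing_conj d _ b R hbR, Complex.norm_conj]
      exact hder'
end

section
/- (Theorem 3.1(i), ferromagnetic invariant arc) Let d ≥ 2 be an integer, let b ∈ ((d−1)/(d+1), 1), and let θ_b be as in Lemma 3.8(i). Then for every θ ∈ (−θ_b, θ_b) and ξ = e^{iθ}, there exists a closed circular arc I ⊂ ∂𝔻 having 1 as a boundary point, with −1 ∉ I, such that f_{ξ,b}(I) ⊆ I. In particular, the orbit of ξ under f_{ξ,b} avoids −1: f_{ξ,b}^{∘n}(ξ) ≠ −1 for all n ≥ 0. -/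
/-- The closed circular arc `{e^{it} : t between 0 and s}` on the unit circle; its
boundary points are `1` and `e^{is}`. -/
def circArc (s : ℝ) : Set ℂ := (fun t : ℝ => Complex.exp (t * Complex.I)) '' Set.uIcc 0 s

noncomputable def argW (b t : ℝ) : ℝ := Real.arctan (b * Real.sin t / (1 + b * Real.cos t))

noncomputable def gmap (d : ℕ) (θ b t : ℝ) : ℝ := θ + d * t - 2 * d * argW b t

lemma xpos {b : ℝ} (hb0 : 0 < b) (hb1 : b < 1) (t : ℝ) : 0 < 1 + b * Real.cos t := by
  nlinarith [Real.neg_one_le_cos t]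

lemma Dpos {b : ℝ} (hb0 : 0 < b) (hb1 : b < 1) (t : ℝ) :
    0 < 1 + 2 * b * Real.cos t + b ^ 2 := by
  nlinarith [Real.neg_one_le_cos t]

lemma argW_neg (b t : ℝ) : argW b (-t) = - argW b t := by
  unfold argW
  rw [Real.sin_neg, Real.cos_neg, ← Real.arctan_neg]
  ring_nf

lemma argW_zero (b : ℝ) : argW b 0 = 0 := by simp [argW]

-- the polar decomposition of 1 + b e^{it}
lemma expW {b : ℝ} (hb0 : 0 < b) (hb1 : b < 1) (t : ℝ) :
    (1 : ℂ) + b * Complex.exp (t * Complex.I) =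
      (Real.sqrt ((1 + b * Real.cos t) ^ 2 + (b * Real.sin t) ^ 2) : ℂ) *
        Complex.exp (argW b t * Complex.I) := by
  have hx : 0 < 1 + b * Real.cos t := xpos hb0 hb1 t
  set x := 1 + b * Real.cos t with hxdef
  set y := b * Real.sin t with hydef
  have hS : (0:ℝ) < x ^ 2 + y ^ 2 := by positivity
  have h1r : Real.sqrt (1 + (y / x) ^ 2) = Real.sqrt (x ^ 2 + y ^ 2) / x := by
    rw [show 1 + (y/x)^2 = (x^2+y^2)/x^2 by field_simp,
      Real.sqrt_div hS.le, Real.sqrt_sq hx.le]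
  have hs0 : Real.sqrt (x ^ 2 + y ^ 2) ≠ 0 := (Real.sqrt_pos.2 hS).ne'
  have hcos : Real.cos (argW b t) = x / Real.sqrt (x ^ 2 + y ^ 2) := by
    rw [argW, ← hydef, ← hxdef, Real.cos_arctan, h1r]
    field_simp
  have hsin : Real.sin (argW b t) = y / Real.sqrt (x ^ 2 + y ^ 2) := by
    rw [argW, ← hydef, ← hxdef, Real.sin_arctan, h1r]
    field_simp
  rw [Complex.exp_mul_I, Complex.exp_mul_I]
  simp only [← Complex.ofReal_cos, ← Complex.ofReal_sin]
  rw [hcos, hsin, Complex.ext_iff]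
  constructor <;> simp [Complex.cos_ofReal_re, Complex.sin_ofReal_re] <;> field_simp <;> ring

lemma fIsing_circle {b : ℝ} (hb0 : 0 < b) (hb1 : b < 1) (d : ℕ) (θ t : ℝ) :
    fIsing d (Complex.exp (θ * Complex.I)) (b : ℂ) (Complex.exp (t * Complex.I)) =
      Complex.exp ((gmap d θ b t : ℝ) * Complex.I) := by
  have hx : 0 < 1 + b * Real.cos t := xpos hb0 hb1 t
  have hS : (0:ℝ) < (1 + b * Real.cos t) ^ 2 + (b * Real.sin t) ^ 2 := by positivity
  set S : ℝ := (1 + b * Real.cos t) ^ 2 + (b * Real.sin t) ^ 2 with hSdef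
  have hw : (1 : ℂ) + b * Complex.exp (t * Complex.I) =
      (Real.sqrt S : ℂ) * Complex.exp (argW b t * Complex.I) := expW hb0 hb1 t
  have hw' : (1 : ℂ) + b * Complex.exp ((-t) * Complex.I) =
      (Real.sqrt S : ℂ) * Complex.exp ((- argW b t) * Complex.I) := by
    have hconj := congrArg (starRingEnd ℂ) hw
    push_cast
    simpa [map_add, map_mul, map_one, ← Complex.exp_conj, Complex.conj_ofReal,
      Complex.conj_I, mul_neg, neg_mul] using hconj
  have hnum : Complex.exp (t * Complex.I) + b =
      Complex.exp (t * Complex.I) * ((1 : ℂ) + b * Complex.exp ((-t) * Complex.I)) := by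
    rw [mul_add, mul_one, ← mul_assoc, mul_comm (Complex.exp (t * Complex.I)) (b:ℂ),
      mul_assoc, ← Complex.exp_add]
    norm_num
  have hs0 : (Real.sqrt S : ℂ) ≠ 0 := by
    simpa using (Real.sqrt_pos.2 hS).ne'
  have hratio : (Complex.exp (t * Complex.I) + b) / ((b : ℂ) * Complex.exp (t * Complex.I) + 1) =
      Complex.exp ((t - 2 * argW b t : ℝ) * Complex.I) := by
    rw [hnum, show ((b : ℂ) * Complex.exp (t * Complex.I) + 1) =
      (1 : ℂ) + b * Complex.exp (t * Complex.I) by ring, hw, hw']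
    rw [mul_left_comm, mul_div_mul_left _ _ hs0, ← Complex.exp_add, ← Complex.exp_sub]
    congr 1
    push_cast
    ring
  rw [fIsing, hratio, ← Complex.exp_nat_mul, ← Complex.exp_add]
  congr 1
  rw [gmap]
  push_cast
  ring

lemma hasDerivAt_argW {b : ℝ} (hb0 : 0 < b) (hb1 : b < 1) (t : ℝ) :
    HasDerivAt (argW b) (b * (Real.cos t + b) / (1 + 2 * b * Real.cos t + b ^ 2)) t := by
  have hx : 0 < 1 + b * Real.cos t := xpos hb0 hb1 t
  have hD : 0 < 1 + 2 * b * Real.cos t + b ^ 2 := Dpos hb0 hb1 t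
  have hu : HasDerivAt (fun t => b * Real.sin t / (1 + b * Real.cos t))
      ((b * Real.cos t * (1 + b * Real.cos t) - b * Real.sin t * (b * -Real.sin t)) /
        (1 + b * Real.cos t) ^ 2) t := by
    exact (((Real.hasDerivAt_sin t).const_mul b).div
      (((Real.hasDerivAt_cos t).const_mul b).const_add 1) hx.ne')
  have := (Real.hasDerivAt_arctan (b * Real.sin t / (1 + b * Real.cos t))).comp t hu
  refine this.congr_deriv ?_
  have pyth := Real.sin_sq_add_cos_sq t
  have hnum : b * Real.cos t * (1 + b * Real.cos t) - b * Real.sin t * (b * -Real.sin t)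
      = b * (Real.cos t + b) := by linear_combination (b^2) * pyth
  have hden : 1 + (b * Real.sin t / (1 + b * Real.cos t)) ^ 2
      = (1 + 2 * b * Real.cos t + b ^ 2) / (1 + b * Real.cos t) ^ 2 := by
    field_simp
    linear_combination (b^2) * pyth
  rw [hnum, hden]
  field_simp

lemma hasDerivAt_gmap {b : ℝ} (hb0 : 0 < b) (hb1 : b < 1) (d : ℕ) (θ t : ℝ) :
    HasDerivAt (gmap d θ b) (d * (1 - b ^ 2) / (1 + 2 * b * Real.cos t + b ^ 2)) t := by
  have hD : 0 < 1 + 2 * b * Real.cos t + b ^ 2 := Dpos hb0 hb1 t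
  have h1 : HasDerivAt (fun t : ℝ => θ + d * t - 2 * d * argW b t)
      (d * 1 - 2 * d * (b * (Real.cos t + b) / (1 + 2 * b * Real.cos t + b ^ 2))) t := by
    exact ((hasDerivAt_id t).const_mul (d:ℝ)).const_add θ |>.sub
      ((hasDerivAt_argW hb0 hb1 t).const_mul (2 * (d:ℝ)))
  refine h1.congr_deriv ?_
  field_simp
  ring

lemma gmap_strictMono {b : ℝ} (hb0 : 0 < b) (hb1 : b < 1) (d : ℕ) (hd : 2 ≤ d) (θ : ℝ) :
    StrictMono (gmap d θ b) := by
  apply strictMono_of_deriv_pos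
  intro t
  rw [(hasDerivAt_gmap hb0 hb1 d θ t).deriv]
  have hD : 0 < 1 + 2 * b * Real.cos t + b ^ 2 := Dpos hb0 hb1 t
  have h2 : (2:ℝ) ≤ d := by exact_mod_cast hd
  exact div_pos (mul_pos (by linarith) (by nlinarith)) hD

lemma gmap_continuous {b : ℝ} (hb0 : 0 < b) (hb1 : b < 1) (d : ℕ) (θ : ℝ) :
    Continuous (gmap d θ b) :=
  continuous_iff_continuousAt.2 fun t => (hasDerivAt_gmap hb0 hb1 d θ t).continuousAt

lemma gmap_zero {b : ℝ} (d : ℕ) (θ : ℝ) : gmap d θ b 0 = θ := by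
  simp [gmap, argW_zero]

noncomputable def tstar (d : ℕ) (b : ℝ) : ℝ :=
  Real.arccos ((d * (1 - b ^ 2) - (1 + b ^ 2)) / (2 * b))

noncomputable def thetaHat (d : ℕ) (b : ℝ) : ℝ :=
  2 * d * argW b (tstar d b) - ((d : ℝ) - 1) * tstar d b

section params
variable {d : ℕ} {b : ℝ}

lemma b_pos (hd : 2 ≤ d) (hb₁ : ((d : ℝ) - 1) / ((d : ℝ) + 1) < b) (hb₂ : b < 1) : 0 < b := by
  have h2 : (2:ℝ) ≤ d := by exact_mod_cast hd
  have : (0:ℝ) ≤ ((d:ℝ) - 1)/((d:ℝ)+1) := div_nonneg (by linarith) (by linarith)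
  linarith

lemma c_mem (hd : 2 ≤ d) (hb₁ : ((d : ℝ) - 1) / ((d : ℝ) + 1) < b) (hb₂ : b < 1) : (d * (1 - b ^ 2) - (1 + b ^ 2)) / (2 * b) ∈ Set.Ioo (-1 : ℝ) 1 := by
  have hb0 := b_pos hd hb₁ hb₂
  have h2 : (2:ℝ) ≤ d := by exact_mod_cast hd
  have hd1 : ((d:ℝ) - 1) < b * ((d:ℝ) + 1) := by
    rw [div_lt_iff₀ (by linarith : (0:ℝ) < (d:ℝ)+1)] at hb₁
    linarith
  constructor
  · rw [lt_div_iff₀ (by linarith : (0:ℝ) < 2*b)]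
    nlinarith
  · rw [div_lt_iff₀ (by linarith : (0:ℝ) < 2*b)]
    nlinarith

lemma tstar_mem (hd : 2 ≤ d) (hb₁ : ((d : ℝ) - 1) / ((d : ℝ) + 1) < b) (hb₂ : b < 1) : tstar d b ∈ Set.Ioo 0 Real.pi := by
  have hc := c_mem hd hb₁ hb₂
  refine ⟨Real.arccos_pos.2 hc.2, lt_of_le_of_ne (Real.arccos_le_pi _) fun h => ?_⟩
  have := Real.cos_arccos hc.1.le hc.2.le
  rw [show Real.arccos _ = tstar d b from rfl] at this
  rw [h, Real.cos_pi] at this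
  linarith [hc.1]

lemma cos_tstar (hd : 2 ≤ d) (hb₁ : ((d : ℝ) - 1) / ((d : ℝ) + 1) < b) (hb₂ : b < 1) : Real.cos (tstar d b) = (d * (1 - b ^ 2) - (1 + b ^ 2)) / (2 * b) := by
  have hc := c_mem hd hb₁ hb₂
  exact Real.cos_arccos hc.1.le hc.2.le

lemma D_tstar (hd : 2 ≤ d) (hb₁ : ((d : ℝ) - 1) / ((d : ℝ) + 1) < b) (hb₂ : b < 1) : 1 + 2 * b * Real.cos (tstar d b) + b ^ 2 = d * (1 - b ^ 2) := by
  have hb0 := b_pos hd hb₁ hb₂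
  rw [cos_tstar hd hb₁ hb₂]
  field_simp
  ring

lemma argW_lt_half (hd : 2 ≤ d) (hb₁ : ((d : ℝ) - 1) / ((d : ℝ) + 1) < b) (hb₂ : b < 1) {t : ℝ} (ht0 : 0 < t) (htpi : t < Real.pi) : argW b t < t / 2 := by
  have hb0 := b_pos hd hb₁ hb₂
  have hpi := Real.pi_pos
  have hc2 : 0 < Real.cos (t/2) :=
    Real.cos_pos_of_mem_Ioo ⟨by linarith, by linarith⟩
  have hs2 : 0 < Real.sin (t/2) := Real.sin_pos_of_pos_of_lt_pi (by linarith) (by linarith)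
  have hx : 0 < 1 + b * Real.cos t := xpos hb0 hb₂ t
  have hsin : Real.sin t = 2 * Real.sin (t/2) * Real.cos (t/2) := by
    rw [show t = 2 * (t/2) by ring, Real.sin_two_mul]; ring_nf
  have hcos : Real.cos t = 2 * Real.cos (t/2) ^ 2 - 1 := by
    rw [show t = 2 * (t/2) by ring, Real.cos_two_mul]; ring_nf
  have hlt : b * Real.sin t / (1 + b * Real.cos t) < Real.tan (t/2) := by
    rw [Real.tan_eq_sin_div_cos, div_lt_div_iff₀ hx hc2]
    rw [hsin, hcos]
    nlinarith
  calc argW b t < Real.arctan (Real.tan (t/2)) := Real.arctan_strictMono hlt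
    _ = t / 2 := Real.arctan_tan (by linarith) (by linarith)

lemma thetaHat_lt_pi (hd : 2 ≤ d) (hb₁ : ((d : ℝ) - 1) / ((d : ℝ) + 1) < b) (hb₂ : b < 1) : thetaHat d b < Real.pi := by
  have ht := tstar_mem hd hb₁ hb₂
  have h2 : (2:ℝ) ≤ d := by exact_mod_cast hd
  have hA := argW_lt_half hd hb₁ hb₂ ht.1 ht.2
  rw [thetaHat]
  nlinarith [ht.1, ht.2]

lemma thetaHat_pos (hd : 2 ≤ d) (hb₁ : ((d : ℝ) - 1) / ((d : ℝ) + 1) < b) (hb₂ : b < 1) :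
    0 < thetaHat d b := by
  have hb0 := b_pos hd hb₁ hb₂
  have ht := tstar_mem hd hb₁ hb₂
  have hD := D_tstar hd hb₁ hb₂
  set φ : ℝ → ℝ := fun t => gmap d 0 b t - t with hφ
  have hder : ∀ t : ℝ, HasDerivAt φ
      (d * (1 - b ^ 2) / (1 + 2 * b * Real.cos t + b ^ 2) - 1) t :=
    fun t => (hasDerivAt_gmap hb0 hb₂ d 0 t).sub (hasDerivAt_id t)
  have hanti : StrictAntiOn φ (Set.Icc 0 (tstar d b)) := by
    apply strictAntiOn_of_deriv_neg (convex_Icc _ _)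
    · exact ((gmap_continuous hb0 hb₂ d 0).sub continuous_id).continuousOn
    · intro x hx
      rw [interior_Icc] at hx
      rw [(hder x).deriv]
      have hDx : 0 < 1 + 2 * b * Real.cos x + b ^ 2 := Dpos hb0 hb₂ x
      have hcos : Real.cos (tstar d b) < Real.cos x := by
        apply Real.strictAntiOn_cos ⟨hx.1.le, (hx.2.trans ht.2).le⟩ ⟨ht.1.le, ht.2.le⟩ hx.2
      rw [div_sub_one hDx.ne', div_neg_iff]
      right
      constructor
      · rw [← hD]; nlinarith
      · exact hDx
  have h0 : φ (tstar d b) < φ 0 := hanti (Set.left_mem_Icc.2 ht.1.le)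
    (Set.right_mem_Icc.2 ht.1.le) ht.1
  have hφ0 : φ 0 = 0 := by simp [hφ, gmap_zero]
  have hφt : φ (tstar d b) = - thetaHat d b := by
    simp only [hφ, gmap, thetaHat]
    ring
  rw [hφ0, hφt] at h0
  linarith

lemma theta_eq (hd : 2 ≤ d) (hb₁ : ((d : ℝ) - 1) / ((d : ℝ) + 1) < b) (hb₂ : b < 1)
    {θb : ℝ} (hθb : θb ∈ Set.Ioo 0 Real.pi)
    (hpar : ∃ R : ℂ, ‖R‖ = 1 ∧
      fIsing d (Complex.exp (θb * Complex.I)) (b : ℂ) R = R ∧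
      deriv (fIsing d (Complex.exp (θb * Complex.I)) (b : ℂ)) R = 1) :
    θb = thetaHat d b := by
  have hb0 := b_pos hd hb₁ hb₂
  have hpi := Real.pi_pos
  obtain ⟨R, hR, hfix, hder⟩ := hpar
  set ξ : ℂ := Complex.exp (θb * Complex.I) with hξ
  set t₀ : ℝ := R.arg with ht₀
  have hRe : R = Complex.exp ((t₀ : ℝ) * Complex.I) := by
    conv_lhs => rw [← Complex.norm_mul_exp_arg_mul_I R]
    rw [hR, Complex.ofReal_one, one_mul]
  -- differentiability of fIsing at R
  have hne : (b : ℂ) * R + 1 ≠ 0 := by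
    intro h
    have h1 : (b : ℂ) * R = -1 := by linear_combination h
    have h2 : ‖(b:ℂ) * R‖ = b := by
      rw [norm_mul, Complex.norm_real, hR, mul_one, Real.norm_of_nonneg hb0.le]
    rw [h1] at h2
    simp at h2
    linarith
  have hfd : HasDerivAt (fIsing d ξ (b:ℂ)) (deriv (fIsing d ξ (b:ℂ)) R) R := by
    apply DifferentiableAt.hasDerivAt
    show DifferentiableAt ℂ (fun z : ℂ => ξ * ((z + (b:ℂ)) / ((b:ℂ) * z + 1)) ^ d) R
    have hq : DifferentiableAt ℂ (fun z : ℂ => (z + (b:ℂ)) / ((b:ℂ) * z + 1)) R :=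
      DifferentiableAt.div (by fun_prop) (by fun_prop) hne
    exact (hq.pow d).const_mul ξ
  -- derivative of t ↦ f(e^{it}) two ways
  have hinner : ∀ z : ℂ, HasDerivAt (fun z : ℂ => Complex.exp (z * Complex.I))
      (Complex.exp (z * Complex.I) * Complex.I) z := by
    intro z
    exact ((Complex.hasDerivAt_exp (z * Complex.I)).comp z
      ((hasDerivAt_id z).mul_const Complex.I)).congr_deriv (by simp)
  have h1 : HasDerivAt (fun t : ℝ => fIsing d ξ (b:ℂ) (Complex.exp ((t:ℂ) * Complex.I)))
      (deriv (fIsing d ξ (b:ℂ)) R * (Complex.exp ((t₀:ℂ) * Complex.I) * Complex.I)) t₀ := by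
    have hfd' : HasDerivAt (fIsing d ξ (b:ℂ)) (deriv (fIsing d ξ (b:ℂ)) R)
        (Complex.exp ((t₀:ℂ) * Complex.I)) := by rw [← hRe]; exact hfd
    exact (hfd'.comp (t₀ : ℂ) (hinner (t₀:ℂ))).comp_ofReal
  have gder := hasDerivAt_gmap hb0 hb₂ d θb t₀
  set g' : ℝ := d * (1 - b ^ 2) / (1 + 2 * b * Real.cos t₀ + b ^ 2) with hg'
  have h2 : HasDerivAt (fun t : ℝ => Complex.exp ((gmap d θb b t : ℝ) * Complex.I))
      (((g' : ℂ) * Complex.I) • Complex.exp ((gmap d θb b t₀ : ℝ) * Complex.I)) t₀ := by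
    have hin : HasDerivAt (fun t : ℝ => ((gmap d θb b t : ℝ) : ℂ) * Complex.I)
        ((g' : ℂ) * Complex.I) t₀ := (gder.ofReal_comp).mul_const Complex.I
    exact HasDerivAt.scomp t₀ (Complex.hasDerivAt_exp _) hin
  have hfuneq : (fun t : ℝ => fIsing d ξ (b:ℂ) (Complex.exp ((t:ℂ) * Complex.I)))
      = fun t : ℝ => Complex.exp ((gmap d θb b t : ℝ) * Complex.I) := by
    funext t; exact fIsing_circle hb0 hb₂ d θb t
  rw [hfuneq] at h1
  have hfixg : Complex.exp ((gmap d θb b t₀ : ℝ) * Complex.I)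
      = Complex.exp ((t₀:ℝ) * Complex.I) := by
    rw [← fIsing_circle hb0 hb₂ d θb t₀, ← hRe, hfix, hRe]
  have huniq := h1.unique h2
  rw [hder, hfixg] at huniq
  have hg1 : (g' : ℂ) = 1 := by
    have h3 : ((g':ℂ) - 1) * (Complex.exp ((t₀:ℝ) * Complex.I) * Complex.I) = 0 := by
      rw [smul_eq_mul] at huniq
      linear_combination huniq.symm
    rcases mul_eq_zero.1 h3 with h | h
    · linear_combination h
    · exact absurd h (mul_ne_zero (Complex.exp_ne_zero _) Complex.I_ne_zero)
  have hg1R : g' = 1 := by exact_mod_cast hg1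
  have hDpos := Dpos hb0 hb₂ t₀
  have hDt : 1 + 2 * b * Real.cos t₀ + b ^ 2 = d * (1 - b ^ 2) := by
    rw [hg'] at hg1R
    rw [div_eq_one_iff_eq hDpos.ne'] at hg1R
    linarith
  have hcos : Real.cos t₀ = Real.cos (tstar d b) := by
    have hDs := D_tstar hd hb₁ hb₂
    have h2b : 2 * b * Real.cos t₀ = 2 * b * Real.cos (tstar d b) := by linarith
    exact mul_left_cancel₀ (by positivity) h2b
  have harg1 : -Real.pi < t₀ := Complex.neg_pi_lt_arg R
  have harg2 : t₀ ≤ Real.pi := Complex.arg_le_pi R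
  have hts := tstar_mem hd hb₁ hb₂
  have hcm := c_mem hd hb₁ hb₂
  have hcts : (-1:ℝ) < Real.cos (tstar d b) := by
    rw [cos_tstar hd hb₁ hb₂]; exact hcm.1
  have ht₀ne : t₀ ≠ Real.pi := by
    intro h
    rw [h, Real.cos_pi] at hcos
    linarith
  have habs : |t₀| = tstar d b := by
    apply Real.injOn_cos ⟨abs_nonneg _, abs_le.2 ⟨by linarith, lt_of_le_of_ne harg2 ht₀ne |>.le⟩⟩
      ⟨hts.1.le, hts.2.le⟩
    rw [Real.cos_abs, hcos]
  have hint : ∃ n : ℤ, gmap d θb b t₀ = t₀ + n * (2 * Real.pi) := by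
    obtain ⟨n, hn⟩ := Complex.exp_eq_exp_iff_exists_int.1 hfixg
    refine ⟨n, ?_⟩
    have him := congrArg Complex.im hn
    simpa [Complex.add_im, Complex.mul_im, Complex.mul_re] using him
  obtain ⟨n, hn⟩ := hint
  have hthp := thetaHat_pos hd hb₁ hb₂
  have hthpi := thetaHat_lt_pi hd hb₁ hb₂
  rcases abs_cases t₀ with ⟨he, _⟩ | ⟨he, _⟩
  · have ht0 : t₀ = tstar d b := by rw [← he, habs]
    rw [ht0, gmap] at hn
    have hrel : θb - thetaHat d b = n * (2 * Real.pi) := by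
      rw [thetaHat]; linarith
    have hn0 : n = 0 := by
      by_contra h
      have h1 : (1:ℝ) ≤ |(n:ℝ)| := by
        exact_mod_cast Int.one_le_abs (by omega : n ≠ 0)
      have h2 : |θb - thetaHat d b| = |(n:ℝ)| * (2 * Real.pi) := by
        rw [hrel, abs_mul, abs_of_pos (by linarith : (0:ℝ) < 2 * Real.pi)]
      have h3 : |θb - thetaHat d b| < Real.pi := by
        rw [abs_lt]; constructor <;> linarith [hθb.1, hθb.2]
      nlinarith
    rw [hn0] at hrel
    push_cast at hrel
    linarith
  · exfalso
    have ht0 : t₀ = -tstar d b := by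
      rw [he] at habs; linarith
    rw [ht0, gmap, argW_neg] at hn
    have hrel : θb + thetaHat d b = n * (2 * Real.pi) := by
      rw [thetaHat]; linarith
    have hl : (0:ℝ) < n := by nlinarith [hθb.1]
    have hu : (n:ℝ) < 1 := by nlinarith [hθb.2]
    have : (0:ℤ) < n := by exact_mod_cast hl
    have : n < 1 := by exact_mod_cast hu
    omega

lemma neg_one_not_mem_circArc {s : ℝ} (hs1 : -Real.pi < s) (hs2 : s < Real.pi) :
    (-1 : ℂ) ∉ circArc s := by
  have hpi := Real.pi_pos
  rintro ⟨t, ht, hexp⟩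
  have hl : -Real.pi < t := lt_of_lt_of_le (lt_min (by linarith) hs1) ht.1
  have hu : t < Real.pi := lt_of_le_of_lt ht.2 (max_lt (by linarith) hs2)
  have hexp' : Complex.exp ((t:ℝ) * Complex.I) = Complex.exp ((Real.pi : ℝ) * Complex.I) := by
    rw [Complex.exp_pi_mul_I]
    exact hexp
  obtain ⟨n, hn⟩ := Complex.exp_eq_exp_iff_exists_int.1 hexp'
  have him := congrArg Complex.im hn
  simp [Complex.add_im, Complex.mul_im, Complex.mul_re] at him
  rcases le_or_gt 0 n with h | h
  · have : (0:ℝ) ≤ n := by exact_mod_cast h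
    nlinarith
  · have hn1 : n ≤ -1 := by omega
    have : (n:ℝ) ≤ -1 := by exact_mod_cast hn1
    nlinarith

lemma invariant_arc {b : ℝ} (hb0 : 0 < b) (hb₂ : b < 1) {d : ℕ} (hd : 2 ≤ d) {θ s : ℝ}
    (hfix : gmap d θ b s = s) (hθmem : θ ∈ Set.uIcc 0 s) :
    Set.MapsTo (fIsing d (Complex.exp (θ * Complex.I)) (b : ℂ)) (circArc s) (circArc s) := by
  rintro x ⟨t, ht, rfl⟩
  have hmono := (gmap_strictMono hb0 hb₂ d hd θ).monotone
  refine ⟨gmap d θ b t, ?_, (fIsing_circle hb0 hb₂ d θ t).symm⟩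
  have h1 : gmap d θ b t ∈ Set.uIcc (gmap d θ b 0) (gmap d θ b s) := by
    rw [Set.uIcc, hmono.map_min.symm, hmono.map_max.symm]
    exact ⟨hmono ht.1, hmono ht.2⟩
  rw [gmap_zero, hfix] at h1
  exact Set.uIcc_subset_uIcc hθmem Set.right_mem_uIcc h1

/-- Theorem 3.1(i): for `b ∈ ((d-1)/(d+1), 1)`, `θ_b` the parabolic parameter of Lemma
3.8(i), and `ξ = e^{iθ}` with `θ ∈ (-θ_b, θ_b)`, there is a closed circular arc with
boundary point 1, not containing -1, that is forward invariant under `f_{ξ,b}`;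
in particular the orbit of `ξ` avoids `-1`. -/
theorem fIsing_ferro_invariant_arc (d : ℕ) (hd : 2 ≤ d) (b : ℝ)
    (hb₁ : ((d : ℝ) - 1) / ((d : ℝ) + 1) < b) (hb₂ : b < 1)
    (θb : ℝ) (hθb : θb ∈ Set.Ioo 0 Real.pi)
    (hpar : ∃ R : ℂ, ‖R‖ = 1 ∧
      fIsing d (Complex.exp (θb * Complex.I)) (b : ℂ) R = R ∧
      deriv (fIsing d (Complex.exp (θb * Complex.I)) (b : ℂ)) R = 1) :
    ∀ θ : ℝ, -θb < θ → θ < θb →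
      (∃ s : ℝ, -Real.pi < s ∧ s < Real.pi ∧ (-1 : ℂ) ∉ circArc s ∧
        Set.MapsTo (fIsing d (Complex.exp (θ * Complex.I)) (b : ℂ))
          (circArc s) (circArc s)) ∧
      ∀ n : ℕ, (fIsing d (Complex.exp (θ * Complex.I)) (b : ℂ))^[n]
        (Complex.exp (θ * Complex.I)) ≠ -1 := by
  intro θ hθl hθr
  have hb0 : 0 < b := b_pos hd hb₁ hb₂
  have hth : θb = thetaHat d b := theta_eq hd hb₁ hb₂ hθb hpar
  rw [hth] at hθl hθr
  have hts := tstar_mem hd hb₁ hb₂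
  have hpi := Real.pi_pos
  set h : ℝ → ℝ := fun t => gmap d θ b t - t with hhdef
  have hcont : Continuous h := (gmap_continuous hb0 hb₂ d θ).sub continuous_id
  have hmono := (gmap_strictMono hb0 hb₂ d hd θ).monotone
  have h0 : h 0 = θ := by simp [hhdef, gmap_zero]
  have hT : h (tstar d b) = θ - thetaHat d b := by
    simp only [hhdef, gmap, thetaHat]; ring
  have hnT : h (-(tstar d b)) = θ + thetaHat d b := by
    simp only [hhdef, gmap, argW_neg, thetaHat]; ring
  obtain ⟨s, hs1, hs2, hgfix, hθmem⟩ :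
      ∃ s : ℝ, -Real.pi < s ∧ s < Real.pi ∧ gmap d θ b s = s ∧ θ ∈ Set.uIcc 0 s := by
    rcases le_total 0 θ with hsign | hsign
    · have hsub := intermediate_value_Icc' hts.1.le hcont.continuousOn
      obtain ⟨s, hsmem, hhs⟩ := hsub (a := 0) ⟨by rw [hT]; linarith, by rw [h0]; exact hsign⟩
      have hfx : gmap d θ b s = s := by
        have : gmap d θ b s - s = 0 := hhs
        linarith
      have hθs : θ ≤ s := by
        calc θ = gmap d θ b 0 := (gmap_zero d θ).symm
          _ ≤ gmap d θ b s := hmono hsmem.1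
          _ = s := hfx
      exact ⟨s, by linarith [hsmem.1], by linarith [hsmem.2, hts.2], hfx,
        by rw [Set.uIcc_of_le hsmem.1]; exact ⟨hsign, hθs⟩⟩
    · have hsub := intermediate_value_Icc' (by linarith [hts.1] : -(tstar d b) ≤ 0)
        hcont.continuousOn
      obtain ⟨s, hsmem, hhs⟩ := hsub (a := 0)
        ⟨by rw [h0]; exact hsign, by rw [hnT]; linarith⟩
      have hfx : gmap d θ b s = s := by
        have : gmap d θ b s - s = 0 := hhs
        linarith
      have hθs : s ≤ θ := by
        calc s = gmap d θ b s := hfx.symm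
          _ ≤ gmap d θ b 0 := hmono hsmem.2
          _ = θ := gmap_zero d θ
      exact ⟨s, by linarith [hsmem.1, hts.2], by linarith [hsmem.2], hfx,
        by rw [Set.uIcc_of_ge hsmem.2]; exact ⟨hθs, hsign⟩⟩
  refine ⟨⟨s, hs1, hs2, neg_one_not_mem_circArc hs1 hs2,
    invariant_arc hb0 hb₂ hd hgfix hθmem⟩, ?_⟩
  intro n hcontra
  have hx : Complex.exp ((θ:ℝ) * Complex.I) ∈ circArc s := ⟨θ, hθmem, rfl⟩
  have hmem := (invariant_arc hb0 hb₂ hd hgfix hθmem).iterate n hx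
  exact neg_one_not_mem_circArc hs1 hs2 (hcontra ▸ hmem)

end params
end

section
/- (Theorem 3.2(ii), maximality in the anti-ferromagnetic case) Let d ≥ 2 be an integer, let b ∈ (1, (d+1)/(d−1)), and let α_b ∈ (0,π) be the smallest α ∈ (0,π) satisfying e^{iα}·((e^{iα}+b)/(b·e^{iα}+1))^d = 1. Then the set of parameters ξ ∈ ℂ for which there exists n ≥ 0 with f_{ξ,b}^{∘n}(ξ) = −1 (iterates taken in the Riemann sphere) accumulates on e^{iα_b} and on e^{−iα_b}: for every ε > 0 there exist such ξ with |ξ − e^{iα_b}| < ε, and likewise for e^{−iα_b}. -/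
open Real Set

set_option maxHeartbeats 2000000




noncomputable def Qb (b s : ℝ) : ℝ := b^2 + 1 + 2*b*Real.cos s

noncomputable def Hfun (b t : ℝ) : ℝ := -∫ s in (0:ℝ)..t, (b^2-1)/Qb b s

lemma Qb_pos {b : ℝ} (hb : 1 < b) (s : ℝ) : 0 < Qb b s := by
  have h1 := Real.neg_one_le_cos s
  unfold Qb; nlinarith [sq_nonneg (b-1)]

lemma Qb_le {b : ℝ} (hb : 1 < b) (s : ℝ) : Qb b s ≤ (b+1)^2 := by
  have h1 := Real.cos_le_one s
  unfold Qb; nlinarith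

lemma contQinv {b : ℝ} (hb : 1 < b) : Continuous fun s => (b^2-1)/Qb b s := by
  apply Continuous.div continuous_const
  · exact continuous_const.add (continuous_const.mul Real.continuous_cos)
  · exact fun s => ne_of_gt (Qb_pos hb s)

lemma Hfun_hasDerivAt {b : ℝ} (hb : 1 < b) (t : ℝ) :
    HasDerivAt (Hfun b) (-((b^2-1)/Qb b t)) t := by
  have h := intervalIntegral.integral_hasDerivAt_right
    ((contQinv hb).intervalIntegrable 0 t)
    ((contQinv hb).stronglyMeasurableAtFilter _ _)
    (contQinv hb).continuousAt
  exact h.neg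

lemma Hfun_cont {b : ℝ} (hb : 1 < b) : Continuous (Hfun b) := by
  have : Differentiable ℝ (Hfun b) := fun t => (Hfun_hasDerivAt hb t).differentiableAt
  exact this.continuous

lemma Hfun_zero (b : ℝ) : Hfun b 0 = 0 := by simp [Hfun]

lemma Hfun_deriv {b : ℝ} (hb : 1 < b) (t : ℝ) :
    deriv (Hfun b) t = -((b^2-1)/Qb b t) := (Hfun_hasDerivAt hb t).deriv

lemma Hfun_strictAnti {b : ℝ} (hb : 1 < b) : StrictAnti (Hfun b) := by
  apply strictAnti_of_deriv_neg
  intro t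
  rw [Hfun_deriv hb]
  have h := Qb_pos hb t
  have : 0 < (b^2-1)/Qb b t := div_pos (by nlinarith) h
  linarith

lemma Hfun_odd (b t : ℝ) : Hfun b (-t) = -Hfun b t := by
  unfold Hfun
  rw [neg_neg]
  have h2 : ∫ x in (0:ℝ)..t, (b^2-1)/Qb b (-x) = ∫ x in (-t)..(0:ℝ), (b^2-1)/Qb b x := by
    simpa using intervalIntegral.integral_comp_neg (a := 0) (b := t) (fun x => (b^2-1)/Qb b x)
  have h3 : ∫ x in (0:ℝ)..t, (b^2-1)/Qb b (-x) = ∫ x in (0:ℝ)..t, (b^2-1)/Qb b x := by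
    apply intervalIntegral.integral_congr; intro x _; simp [Qb, Real.cos_neg]
  have h4 : ∫ s in (0:ℝ)..(-t), (b^2-1)/Qb b s = -∫ x in (-t)..(0:ℝ), (b^2-1)/Qb b x :=
    intervalIntegral.integral_symm _ _
  rw [h4, ← h2, h3, neg_neg]

section core
variable {b : ℝ}
lemma cexp_key1 (b t : ℝ) :
    (Complex.exp (t*Complex.I) + b) * (b*Complex.exp (t*Complex.I) + 1)
      = (Qb b t : ℂ) * Complex.exp (t*Complex.I) := by
  rw [Complex.exp_mul_I]
  unfold Qb
  push_cast
  linear_combination (-(b:ℂ)) * (Complex.sin_sq_add_cos_sq (t:ℂ))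
    + (b:ℂ) * (Complex.sin (t:ℂ))^2 * Complex.I_sq

lemma denom_ne (hb : 1 < b) (t : ℝ) : b*Complex.exp (t*Complex.I) + 1 ≠ 0 := by
  intro h
  have h2 : (b:ℂ)*Complex.exp (t*Complex.I) = -1 := by
    linear_combination h
  have h3 := congrArg (fun z : ℂ => ‖z‖) h2
  rw [norm_mul, Complex.norm_exp_ofReal_mul_I, Complex.norm_real, Real.norm_eq_abs,
    abs_of_pos (by linarith : (0:ℝ) < b)] at h3
  simp at h3
  linarith

lemma hasDerivAt_cexp_real_mul_I {f : ℝ → ℝ} {f' : ℝ} {t : ℝ} (hf : HasDerivAt f f' t) :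
    HasDerivAt (fun s => Complex.exp (f s * Complex.I))
      ((f' : ℂ) * Complex.I * Complex.exp (f t * Complex.I)) t := by
  have h1 : HasDerivAt (fun s : ℝ => ((f s : ℂ)) * Complex.I) ((f':ℂ) * Complex.I) t :=
    (hf.ofReal_comp).mul_const _
  have h2 := (Complex.hasDerivAt_exp ((f t : ℂ) * Complex.I)).scomp t h1
  simpa [Function.comp_def, smul_eq_mul, mul_comm] using h2

lemma Hfun_exp {b : ℝ} (hb : 1 < b) (t : ℝ) :
    Complex.exp ((Hfun b t : ℂ) * Complex.I) * (b*Complex.exp (t*Complex.I) + 1)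
      = Complex.exp (t*Complex.I) + b := by
  set χ : ℝ → ℂ := fun s =>
    (Complex.exp (s*Complex.I) + b) * Complex.exp ((-Hfun b s : ℝ) * Complex.I)
      / (b*Complex.exp (s*Complex.I) + 1) with hχdef
  have hderiv : ∀ s : ℝ, HasDerivAt χ 0 s := by
    intro s
    have hqQ : (((b^2-1)/Qb b s : ℝ) : ℂ) * ((Qb b s : ℝ) : ℂ) = (b:ℂ)^2 - 1 := by
      rw [← Complex.ofReal_mul]
      rw [div_mul_cancel₀ _ (Qb_pos hb s).ne']
      push_cast; ring
    have hkey := cexp_key1 b s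
    have hN : HasDerivAt (fun s : ℝ => Complex.exp (s*Complex.I) + b)
        ((1:ℂ) * Complex.I * Complex.exp (s*Complex.I)) s := by
      simpa using (hasDerivAt_cexp_real_mul_I (hasDerivAt_id s)).add_const (b:ℂ)
    have hE : HasDerivAt (fun s : ℝ => Complex.exp ((-Hfun b s : ℝ) * Complex.I))
        ((((b^2-1)/Qb b s : ℝ) : ℂ) * Complex.I *
          Complex.exp ((-Hfun b s : ℝ) * Complex.I)) s := by
      have : HasDerivAt (fun s => -Hfun b s) ((b^2-1)/Qb b s) s := by
        simpa using (Hfun_hasDerivAt hb s).fun_neg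
      exact hasDerivAt_cexp_real_mul_I this
    have hD : HasDerivAt (fun s : ℝ => b*Complex.exp (s*Complex.I) + 1)
        ((b:ℂ) * ((1:ℂ) * Complex.I * Complex.exp (s*Complex.I))) s := by
      simpa using (((hasDerivAt_cexp_real_mul_I (hasDerivAt_id s))).const_mul (b:ℂ)).add_const 1
    have h := ((hN.fun_mul hE).fun_div hD (denom_ne hb s))
    have hnum : (((1:ℂ) * Complex.I * Complex.exp (s*Complex.I)) *
          Complex.exp ((-Hfun b s : ℝ) * Complex.I) +
        (Complex.exp (s*Complex.I) + b) *
          ((((b^2-1)/Qb b s : ℝ) : ℂ) * Complex.I *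
            Complex.exp ((-Hfun b s : ℝ) * Complex.I))) *
        (b*Complex.exp (s*Complex.I) + 1) -
        ((Complex.exp (s*Complex.I) + b) *
          Complex.exp ((-Hfun b s : ℝ) * Complex.I)) *
        ((b:ℂ) * ((1:ℂ) * Complex.I * Complex.exp (s*Complex.I))) = 0 := by
      linear_combination
        (Complex.I * Complex.exp ((-Hfun b s : ℝ) * Complex.I) *
          (((b^2-1)/Qb b s : ℝ) : ℂ)) * hkey +
        (Complex.I * Complex.exp ((-Hfun b s : ℝ) * Complex.I) *
          Complex.exp (s*Complex.I)) * hqQ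
    rw [hnum, zero_div] at h
    exact h
  have hconst : χ t = χ 0 := by
    apply is_const_of_deriv_eq_zero
    · exact fun s => (hderiv s).differentiableAt
    · exact fun s => (hderiv s).deriv
  have hb1 : ((b:ℂ) + 1) ≠ 0 := by
    have : (b:ℝ) + 1 ≠ 0 := by linarith
    exact_mod_cast fun h => this (by exact_mod_cast h)
  have hχ0 : χ 0 = 1 := by
    simp only [hχdef, Hfun_zero]
    norm_num
    field_simp
    ring
  rw [hχ0] at hconst
  have hne := denom_ne hb t
  rw [hχdef] at hconst
  simp only at hconst
  rw [div_eq_one_iff_eq hne] at hconst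
  calc Complex.exp ((Hfun b t : ℂ) * Complex.I) * (b*Complex.exp (t*Complex.I) + 1)
      = Complex.exp ((Hfun b t : ℂ) * Complex.I) *
        ((Complex.exp (t*Complex.I) + b) * Complex.exp ((-Hfun b t : ℝ) * Complex.I)) := by
        rw [hconst]
    _ = (Complex.exp (t*Complex.I) + b) *
        (Complex.exp ((Hfun b t : ℂ) * Complex.I) * Complex.exp ((-Hfun b t : ℝ) * Complex.I)) := by
        ring
    _ = Complex.exp (t*Complex.I) + b := by
        rw [← Complex.exp_add]
        push_cast
        ring_nf
        simp

end core

lemma W_hasDerivAt {b : ℝ} (hb : 1 < b) {s : ℝ} (h0 : 0 ≤ s) (hs : s < π) :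
    HasDerivAt (fun x => -2 * Real.arctan (((b-1)/(b+1)) * Real.tan (x/2)))
      (-((b^2-1)/Qb b s)) s := by
  have hcpos : 0 < Real.cos (s/2) :=
    Real.cos_pos_of_mem_Ioo ⟨by linarith [Real.pi_pos], by linarith⟩
  have hcos : Real.cos (s/2) ≠ 0 := hcpos.ne'
  have h1 : HasDerivAt (fun x : ℝ => Real.tan (x/2)) ((1 / Real.cos (s/2)^2) * (1/2)) s :=
    by
      have h := (Real.hasDerivAt_tan hcos).comp s ((hasDerivAt_id s).div_const 2)
      exact h
  have h2 := ((Real.hasDerivAt_arctan (((b-1)/(b+1)) * Real.tan (s/2))).comp s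
      (h1.const_mul ((b-1)/(b+1)))).const_mul (-2)
  have hb1 : b + 1 ≠ 0 := by linarith
  have hQ : Qb b s ≠ 0 := (Qb_pos hb s).ne'
  have hc2 : Real.cos (s/2)^2 = (1 + Real.cos s)/2 := by
    have h2m := Real.cos_two_mul (s/2)
    have h : 2*(s/2) = s := by ring
    rw [h] at h2m; linarith
  have hs2 : Real.sin (s/2)^2 = (1 - Real.cos s)/2 := by
    have := Real.sin_sq_add_cos_sq (s/2); linarith
  have hX : (0:ℝ) < 1 + (((b-1)/(b+1)) * Real.tan (s/2))^2 := by positivity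
  have hA : (1 + (((b-1)/(b+1)) * Real.tan (s/2))^2) * Real.cos (s/2)^2
      = Qb b s / (b+1)^2 := by
    rw [Real.tan_eq_sin_div_cos]
    have : Qb b s = b^2+1+2*b*Real.cos s := rfl
    rw [this]
    field_simp
    have hcs : Real.cos s = 2*Real.cos (s/2)^2 - 1 := by linarith [hc2]
    have hsn : Real.sin (s/2)^2 = 1 - Real.cos (s/2)^2 := by linarith [hs2, hc2]
    rw [hcs, hsn]
    ring
  have hval : -2 * (1 / (1 + (((b-1)/(b+1)) * Real.tan (s/2))^2) *
      (((b-1)/(b+1)) * ((1 / Real.cos (s/2)^2) * (1/2)))) = -((b^2-1)/Qb b s) := by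
    have e1 : -2 * (1 / (1 + (((b-1)/(b+1)) * Real.tan (s/2))^2) *
        (((b-1)/(b+1)) * ((1 / Real.cos (s/2)^2) * (1/2))))
        = -((b-1)/(b+1)) / ((1 + (((b-1)/(b+1)) * Real.tan (s/2))^2) * Real.cos (s/2)^2) := by
      field_simp
    rw [e1, hA]
    field_simp
    ring
  rw [← hval]
  convert h2 using 1
  all_goals rfl

lemma Hfun_eq_arctan {b : ℝ} (hb : 1 < b) {t : ℝ} (h0 : 0 ≤ t) (ht : t < π) :
    Hfun b t = -2 * Real.arctan (((b-1)/(b+1)) * Real.tan (t/2)) := by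
  set W : ℝ → ℝ := fun x => -2 * Real.arctan (((b-1)/(b+1)) * Real.tan (x/2)) with hW
  have key : ∀ x ∈ Icc 0 t, (fun y => Hfun b y - W y) x = (fun y => Hfun b y - W y) 0 := by
    apply constant_of_has_deriv_right_zero
    · intro x hx
      have hx2 : x < π := lt_of_le_of_lt hx.2 ht
      exact ((Hfun_hasDerivAt hb x).continuousAt.sub
        (W_hasDerivAt hb hx.1 hx2).continuousAt).continuousWithinAt
    · intro x hx
      have hx2 : x < π := lt_of_lt_of_le hx.2 ht.le
      have h3 := (Hfun_hasDerivAt hb x).sub (W_hasDerivAt hb hx.1 hx2)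
      rw [sub_self] at h3
      exact h3.hasDerivWithinAt
  have h := key t ⟨h0, le_refl t⟩
  simp only [hW] at h ⊢
  have : Real.tan (0/2) = 0 := by norm_num
  rw [Hfun_zero] at h
  rw [this] at h
  simp [Real.arctan_zero] at h
  linarith

lemma sin_nat_mul_le (n : ℕ) {u : ℝ} (hu : 0 ≤ u) (hn : (n:ℝ)*u ≤ π/2) :
    Real.sin ((n:ℝ)*u) ≤ (n:ℝ) * Real.sin u := by
  induction n with
  | zero => simp
  | succ m ih =>
    have hmu : (m:ℝ)*u ≤ π/2 := by
      push_cast at hn; nlinarith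
    have ih' := ih hmu
    have hsin_nonneg : 0 ≤ Real.sin ((m:ℝ)*u) :=
      Real.sin_nonneg_of_nonneg_of_le_pi (by positivity)
        (by nlinarith [Real.pi_pos])
    have hsu : 0 ≤ Real.sin u := by
      apply Real.sin_nonneg_of_nonneg_of_le_pi hu
      have h1 : ((m:ℝ)+1)*u ≤ π/2 := by push_cast at hn ⊢; linarith
      nlinarith [Real.pi_pos]
    have hexp : Real.sin (((m:ℕ)+1:ℝ)*u) = Real.sin ((m:ℝ)*u) * Real.cos u
        + Real.cos ((m:ℝ)*u) * Real.sin u := by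
      rw [show ((m:ℕ)+1:ℝ)*u = (m:ℝ)*u + u by ring, Real.sin_add]
    push_cast
    push_cast at hexp
    rw [hexp]
    have h1 : Real.sin ((m:ℝ)*u) * Real.cos u ≤ Real.sin ((m:ℝ)*u) :=
      mul_le_of_le_one_right hsin_nonneg (Real.cos_le_one u)
    have h2 : Real.cos ((m:ℝ)*u) * Real.sin u ≤ Real.sin u :=
      mul_le_of_le_one_left hsu (Real.cos_le_one _)
    nlinarith [Real.cos_le_one ((m:ℝ)*u)]

lemma sin_nat_mul_lt {n : ℕ} (hn2 : 2 ≤ n) {u : ℝ} (hu : 0 < u) (hn : (n:ℝ)*u ≤ π/2) :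
    Real.sin ((n:ℝ)*u) < (n:ℝ) * Real.sin u := by
  obtain ⟨m, rfl⟩ : ∃ m, n = m + 1 := ⟨n-1, by omega⟩
  have hm1 : 1 ≤ m := by omega
  have hmu : (m:ℝ)*u ≤ π/2 := by
    push_cast at hn; nlinarith
  have hmu_pos : 0 < (m:ℝ)*u := by
    have : (1:ℝ) ≤ (m:ℝ) := by exact_mod_cast hm1
    nlinarith
  have hsinm_pos : 0 < Real.sin ((m:ℝ)*u) := by
    apply Real.sin_pos_of_pos_of_lt_pi hmu_pos
    nlinarith [Real.pi_pos]
  have hcosu : Real.cos u < 1 := by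
    have hupi : u ≤ π := by nlinarith [Real.pi_pos, hn, hu, (by exact_mod_cast hm1 : (1:ℝ) ≤ (m:ℝ))]
    have h := Real.strictAntiOn_cos (Set.mem_Icc.mpr ⟨le_refl 0, Real.pi_pos.le⟩)
      (Set.mem_Icc.mpr ⟨hu.le, hupi⟩) hu
    simpa using h
  have hsu : 0 < Real.sin u := by
    apply Real.sin_pos_of_pos_of_lt_pi hu
    have : (1:ℝ) ≤ (m:ℝ) := by exact_mod_cast hm1
    nlinarith [Real.pi_pos]
  have hle := sin_nat_mul_le m hu.le hmu
  have hexp : Real.sin (((m:ℕ)+1:ℝ)*u) = Real.sin ((m:ℝ)*u) * Real.cos u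
      + Real.cos ((m:ℝ)*u) * Real.sin u := by
    rw [show ((m:ℕ)+1:ℝ)*u = (m:ℝ)*u + u by ring, Real.sin_add]
  push_cast
  push_cast at hexp
  rw [hexp]
  have h1 : Real.sin ((m:ℝ)*u) * Real.cos u < Real.sin ((m:ℝ)*u) := by
    nlinarith
  have h2 : Real.cos ((m:ℝ)*u) * Real.sin u ≤ Real.sin u :=
    mul_le_of_le_one_left hsu.le (Real.cos_le_one _)
  nlinarith

noncomputable def Phi (d : ℕ) (b : ℝ) : ℕ → ℝ → ℝ
  | 0 => fun θ => θ
  | n+1 => fun θ => θ + d * Hfun b (Phi d b n θ)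

lemma Phi_cont {b : ℝ} (hb : 1 < b) (d n : ℕ) : Continuous (Phi d b n) := by
  induction n with
  | zero => exact continuous_id
  | succ m ih =>
    exact continuous_id.add (continuous_const.mul ((Hfun_cont hb).comp ih))

lemma Phi_odd (d : ℕ) (b : ℝ) (n : ℕ) (θ : ℝ) : Phi d b n (-θ) = -(Phi d b n θ) := by
  induction n with
  | zero => rfl
  | succ m ih =>
    show -θ + d * Hfun b (Phi d b m (-θ)) = -(θ + d * Hfun b (Phi d b m θ))
    rw [ih, Hfun_odd]; ring

lemma Hfun_quot {b : ℝ} (hb : 1 < b) (s : ℝ) :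
    (Complex.exp (s*Complex.I) + b) / (b*Complex.exp (s*Complex.I) + 1)
      = Complex.exp ((Hfun b s : ℂ) * Complex.I) := by
  rw [div_eq_iff (denom_ne hb s)]
  exact (Hfun_exp hb s).symm

lemma Phi_iter {b : ℝ} (hb : 1 < b) (d n : ℕ) (θ : ℝ) :
    (fIsing d (Complex.exp (θ*Complex.I)) b)^[n] (Complex.exp (θ*Complex.I))
      = Complex.exp ((Phi d b n θ : ℝ) * Complex.I) := by
  induction n with
  | zero => rfl
  | succ m ih =>
    rw [Function.iterate_succ_apply', ih]
    show Complex.exp (θ*Complex.I) *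
        ((Complex.exp ((Phi d b m θ : ℝ)*Complex.I) + b) /
          (b*Complex.exp ((Phi d b m θ : ℝ)*Complex.I) + 1)) ^ d
      = Complex.exp ((Phi d b (m+1) θ : ℝ) * Complex.I)
    rw [Hfun_quot hb]
    rw [← Complex.exp_nat_mul]
    rw [← Complex.exp_add]
    show _ = Complex.exp (((θ + d * Hfun b (Phi d b m θ) : ℝ)) * Complex.I)
    push_cast
    ring_nf


/-- Theorem 3.2(ii): for `b ∈ (1, (d+1)/(d-1))` and `α_b ∈ (0,π)` the smallest solution
of `e^{iα}·((e^{iα}+b)/(be^{iα}+1))^d = 1` in `(0,π)`, the parameters `ξ ∈ ℂ` whose orbit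
under `f_{ξ,b}` lands on `-1` accumulate on `e^{iα_b}` and on `e^{-iα_b}`. -/
theorem fIsing_antiferro_bad_parameters_accumulate (d : ℕ) (hd : 2 ≤ d) (b : ℝ)
    (hb₁ : 1 < b) (hb₂ : b < ((d : ℝ) + 1) / ((d : ℝ) - 1))
    (αb : ℝ) (hαb : αb ∈ Set.Ioo 0 Real.pi)
    (heq : fIsing d (Complex.exp (αb * Complex.I)) (b : ℂ)
      (Complex.exp (αb * Complex.I)) = 1)
    (hmin : ∀ α ∈ Set.Ioo 0 Real.pi,
      fIsing d (Complex.exp (α * Complex.I)) (b : ℂ) (Complex.exp (α * Complex.I)) = 1 →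
      αb ≤ α) :
    ∀ ε : ℝ, 0 < ε →
      (∃ ξ : ℂ, ‖ξ - Complex.exp (αb * Complex.I)‖ < ε ∧
        ∃ n : ℕ, (fIsing d ξ (b : ℂ))^[n] ξ = -1) ∧
      (∃ ξ : ℂ, ‖ξ - Complex.exp (-(αb * Complex.I))‖ < ε ∧
        ∃ n : ℕ, (fIsing d ξ (b : ℂ))^[n] ξ = -1) := by
  intro ε hε
  set p := αb with hpdef
  obtain ⟨hp0, hpπ⟩ := hαb
  set D : ℝ := (d : ℝ) with hDdef
  have hD2 : (2:ℝ) ≤ D := by rw [hDdef]; exact_mod_cast hd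
  have hD0 : 0 < D := by linarith
  have hdb : D*(b-1) < b+1 := by
    have hD1 : (0:ℝ) < D - 1 := by linarith
    rw [lt_div_iff₀ hD1] at hb₂
    nlinarith
  have hbm : 0 < b - 1 := by linarith
  have hb2m : 0 < b^2 - 1 := by nlinarith
  -- characterization of solutions on the circle
  have circ_eq : ∀ α : ℝ, fIsing d (Complex.exp (α * Complex.I)) (b : ℂ)
      (Complex.exp (α * Complex.I)) = Complex.exp (((α + D * Hfun b α : ℝ) : ℂ) * Complex.I) := by
    intro α
    have e0 := Phi_iter hb₁ d 1 α
    rw [Function.iterate_one] at e0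
    rw [e0]
    show Complex.exp ((↑(α + (d:ℝ) * Hfun b α) : ℂ) * Complex.I) = _
    rw [hDdef]
  -- Step 1 : p + D Hfun b p = 0
  have hF1 : p + D * Hfun b p = 0 := by
    have h1 : Complex.exp (((p + D * Hfun b p : ℝ) : ℂ) * Complex.I) = 1 := by
      rw [← circ_eq p]; exact heq
    rw [Complex.exp_eq_one_iff] at h1
    obtain ⟨k, hk⟩ := h1
    have hk2 : ((p + D*Hfun b p : ℝ) : ℂ) = (((k : ℝ) * (2*π) : ℝ) : ℂ) := by
      apply mul_right_cancel₀ Complex.I_ne_zero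
      rw [hk]; push_cast; ring
    have hkr : p + D*Hfun b p = (k:ℝ) * (2*π) := by exact_mod_cast hk2
    have hHp_neg : Hfun b p < 0 := by
      have := Hfun_strictAnti hb₁ hp0
      rwa [Hfun_zero] at this
    have hklt : (k:ℝ) < 1 := by
      by_contra hge
      push_neg at hge
      have : (2*π : ℝ) ≤ (k:ℝ)*(2*π) := le_mul_of_one_le_left (by positivity) hge
      nlinarith [Real.pi_pos]
    have hk1 : k ≤ 0 := by exact_mod_cast Int.lt_add_one_iff.mp (by exact_mod_cast hklt)
    rcases eq_or_lt_of_le hk1 with heq0 | hklt0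
    · rw [hkr, heq0]
      simp
    · -- k ≤ -1 : contradiction with minimality
      exfalso
      have hkle : (k:ℝ) ≤ -1 := by
        have : k ≤ -1 := by omega
        exact_mod_cast this
      have hFp : p + D*Hfun b p ≤ -2*π := by
        rw [hkr]; nlinarith [Real.pi_pos]
      set F : ℝ → ℝ := fun α => α + D * Hfun b α with hFdef
      have hFderiv : ∀ t : ℝ, HasDerivAt F (1 + D * -((b^2-1)/Qb b t)) t := by
        intro t
        exact (hasDerivAt_id t).add ((Hfun_hasDerivAt hb₁ t).const_mul D)
      have hFcont : Continuous F :=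
        continuous_id.add (continuous_const.mul (Hfun_cont hb₁))
      -- find α₁ > 0 with Qb > D(b²-1) on [0,α₁]
      have hQ0 : Qb b 0 = (b+1)^2 := by unfold Qb; rw [Real.cos_zero]; ring
      have hQgap : D*(b^2-1) < Qb b 0 := by rw [hQ0]; nlinarith
      have hQcont : Continuous (Qb b) :=
        continuous_const.add (continuous_const.mul Real.continuous_cos)
      obtain ⟨δ₁, hδ₁pos, hδ₁⟩ := Metric.continuousAt_iff.mp (hQcont.continuousAt (x := 0))
          (Qb b 0 - D*(b^2-1)) (by linarith)
      set α₁ : ℝ := min (δ₁/2) (p/2) with hα₁def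
      have hα₁pos : 0 < α₁ := by positivity
      have hα₁p : α₁ < p := by
        have : α₁ ≤ p/2 := min_le_right _ _
        linarith
      have hQbig : ∀ t ∈ Icc 0 α₁, D*(b^2-1) < Qb b t := by
        intro t ht
        have h1 : dist t 0 < δ₁ := by
          rw [Real.dist_eq, sub_zero, abs_of_nonneg ht.1]
          have := ht.2
          have : t ≤ δ₁/2 := le_trans this (min_le_left _ _)
          linarith
        have := hδ₁ h1
        rw [Real.dist_eq] at this
        have := abs_lt.mp this
        linarith [this.1]
      have hFmono : StrictMonoOn F (Icc 0 α₁) := by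
        apply strictMonoOn_of_deriv_pos (convex_Icc 0 α₁) hFcont.continuousOn
        intro x hx
        rw [interior_Icc] at hx
        rw [(hFderiv x).deriv]
        have hQx := hQbig x ⟨hx.1.le, hx.2.le⟩
        have hQxpos := Qb_pos hb₁ x
        have : D*(b^2-1)/Qb b x < 1 := (div_lt_one hQxpos).mpr hQx
        have h2 : D * ((b^2-1)/Qb b x) = D*(b^2-1)/Qb b x := by ring
        rw [mul_neg, h2]
        linarith
      have hFα₁ : 0 < F α₁ := by
        have h0 : F 0 = 0 := by simp [hFdef, Hfun_zero]
        have := hFmono (left_mem_Icc.mpr hα₁pos.le) (right_mem_Icc.mpr hα₁pos.le) hα₁pos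
        rwa [h0] at this
      have hsub := intermediate_value_Icc' hα₁p.le (hFcont.continuousOn (s := Icc α₁ p))
      have hFple : F p ≤ 0 := by
        simp only [hFdef]; nlinarith [Real.pi_pos]
      have h0mem : (0:ℝ) ∈ Icc (F p) (F α₁) := ⟨hFple, hFα₁.le⟩
      obtain ⟨α', hα'mem, hα'⟩ := hsub h0mem
      have hα'0 : 0 < α' := lt_of_lt_of_le hα₁pos hα'mem.1
      have hα'π : α' < π := lt_of_le_of_lt hα'mem.2 hpπ
      have heq' : fIsing d (Complex.exp (α' * Complex.I)) (b : ℂ)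
          (Complex.exp (α' * Complex.I)) = 1 := by
        rw [circ_eq α']
        have : (α' + D*Hfun b α' : ℝ) = 0 := hα'
        rw [this]
        simp
      have := hmin α' ⟨hα'0, hα'π⟩ heq'
      -- p ≤ α' ≤ p forces F p = 0, contradiction
      have hα'p : α' = p := le_antisymm hα'mem.2 this
      rw [hα'p] at hα'
      simp only [hFdef] at hα'
      nlinarith [Real.pi_pos, hα', hFp]
  -- Step 2 : the multiplier inequality  Qb b p < D² (b-1)²
  have hQp : Qb b p < D^2*(b-1)^2 := by
    have hHp := Hfun_eq_arctan hb₁ hp0.le hpπ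
    have harc : Real.arctan (((b-1)/(b+1)) * Real.tan (p/2)) = p/(2*D) := by
      have hDne : (2*D) ≠ 0 := by positivity
      rw [eq_div_iff hDne]
      have h2 : D * Hfun b p = -p := by linarith [hF1]
      rw [hHp] at h2
      linarith
    have htan : ((b-1)/(b+1)) * Real.tan (p/2) = Real.tan (p/(2*D)) := by
      rw [← harc, Real.tan_arctan]
    set S := Real.sin (p/2) with hSdef
    set C := Real.cos (p/2) with hCdef
    set σ := Real.sin (p/(2*D)) with hσdef
    set γ := Real.cos (p/(2*D)) with hγdef
    have hppos2 : 0 < p/2 := by linarith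
    have hppi2 : p/2 < π/2 := by linarith
    have hSpos : 0 < S := Real.sin_pos_of_pos_of_lt_pi hppos2 (by linarith [Real.pi_pos])
    have hCpos : 0 < C := Real.cos_pos_of_mem_Ioo ⟨by linarith [Real.pi_pos], hppi2⟩
    have hu_pos : 0 < p/(2*D) := by positivity
    have hu_lt : p/(2*D) < π/2 := by
      have h4 : (0:ℝ) < 4 := by norm_num
      have h42 : (4:ℝ) ≤ 2*D := by linarith
      have := div_le_div_of_nonneg_left hp0.le h4 h42
      nlinarith [Real.pi_pos]
    have hσpos : 0 < σ := Real.sin_pos_of_pos_of_lt_pi hu_pos (by linarith [Real.pi_pos])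
    have hγpos : 0 < γ := Real.cos_pos_of_mem_Ioo ⟨by linarith [Real.pi_pos], hu_lt⟩
    have hrel : (b-1)*S*γ = (b+1)*σ*C := by
      rw [Real.tan_eq_sin_div_cos, Real.tan_eq_sin_div_cos] at htan
      rw [← hSdef, ← hCdef, ← hσdef, ← hγdef] at htan
      field_simp at htan
      linarith [htan]
    have hDu : (d:ℝ) * (p/(2*D)) = p/2 := by
      rw [hDdef]; field_simp
    have hsl : S < D*σ := by
      have h := sin_nat_mul_lt hd hu_pos (by rw [hDu]; linarith)
      rw [hDu] at h
      rw [hSdef, hσdef, hDdef]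
      exact h
    have hC2 : C^2 = 1 - S^2 := by
      have := Real.sin_sq_add_cos_sq (p/2); rw [← hSdef, ← hCdef] at this; linarith
    have hγσ : γ^2 + σ^2 = 1 := by
      have := Real.sin_sq_add_cos_sq (p/(2*D)); rw [← hσdef, ← hγdef] at this; linarith
    have hcosp : Real.cos p = 1 - 2*S^2 := by
      have h2m := Real.cos_two_mul (p/2)
      have h : 2*(p/2) = p := by ring
      rw [h] at h2m
      rw [hSdef]
      nlinarith [Real.sin_sq_add_cos_sq (p/2), h2m]
    have hQform : Qb b p = (b+1)^2 - 4*b*S^2 := by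
      unfold Qb; rw [hcosp]; ring
    have hS2 : S^2 < D^2*σ^2 := by nlinarith [hsl, hSpos, hσpos, hD0, mul_pos hD0 hσpos]
    have hrel2 : (b+1)^2*σ^2*C^2 = (b-1)^2*S^2*γ^2 := by
      linear_combination (-((b-1)*S*γ + (b+1)*σ*C)) * hrel
    have hsplit : (b+1)^2 - 4*b*S^2 = (b+1)^2*C^2 + (b-1)^2*S^2 := by
      rw [hC2]; ring
    have hσ2pos : 0 < σ^2 := by positivity
    have hkey : ((b+1)^2 - 4*b*S^2) * σ^2 < (D^2*(b-1)^2) * σ^2 := by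
      have e1 : ((b+1)^2 - 4*b*S^2) * σ^2 = (b-1)^2*S^2*γ^2 + (b-1)^2*S^2*σ^2 := by
        rw [hsplit]; linear_combination hrel2
      rw [e1]
      have e2 : (b-1)^2*S^2*γ^2 + (b-1)^2*S^2*σ^2 = (b-1)^2*S^2 := by
        linear_combination ((b-1)^2*S^2) * hγσ
      rw [e2]
      have hb2p : 0 < (b-1)^2 := by positivity
      calc (b-1)^2*S^2 < (b-1)^2*(D^2*σ^2) := by
            exact mul_lt_mul_of_pos_left hS2 hb2p
        _ = (D^2*(b-1)^2)*σ^2 := by ring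
    rw [hQform]
    exact lt_of_mul_lt_mul_right hkey hσ2pos.le
  -- Step 3 : dynamics and escape
  have hQple : ∀ t ∈ Icc p π, Qb b t ≤ Qb b p := by
    intro t ht
    have hcos : Real.cos t ≤ Real.cos p := by
      apply Real.strictAntiOn_cos.antitoneOn
        (Set.mem_Icc.mpr ⟨hp0.le, hpπ.le⟩)
        (Set.mem_Icc.mpr ⟨by linarith [ht.1], ht.2⟩) ht.1
    unfold Qb
    nlinarith
  have hQDsmall : ∀ t ∈ Icc p π, Qb b t < D*(b^2-1) := by
    intro t ht
    have h1 := hQple t ht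
    have h2 : D^2*(b-1)^2 < D*(b^2-1) := by
      have h0 : 0 < D*(b-1) := mul_pos hD0 hbm
      nlinarith [mul_lt_mul_of_pos_left hdb h0]
    linarith [hQp]
  -- δ and θ
  set δ : ℝ := min ε (π - p) / 4 with hδdef
  have hδpos : 0 < δ := by
    have : 0 < min ε (π - p) := lt_min hε (by linarith)
    positivity
  have hδε : δ ≤ ε/4 := by
    have : min ε (π - p) ≤ ε := min_le_left _ _
    rw [hδdef]; linarith
  have hδπ : δ ≤ (π - p)/4 := by
    have : min ε (π - p) ≤ π - p := min_le_right _ _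
    rw [hδdef]; linarith
  set θ : ℝ := p + δ with hθdef
  have hpθ : p < θ := by rw [hθdef]; linarith
  have hθπ : θ < π := by rw [hθdef]; linarith
  -- the one-parameter family map, its second iterate displacement A
  set g : ℝ → ℝ := fun t => θ + D * Hfun b t with hgdef
  set A : ℝ → ℝ := fun t => θ + D * Hfun b (g t) - t with hAdef
  have hg_deriv : ∀ t : ℝ, HasDerivAt g (D * -((b^2-1)/Qb b t)) t := by
    intro t
    exact ((Hfun_hasDerivAt hb₁ t).const_mul D).const_add θ
  have hA_deriv : ∀ t : ℝ, HasDerivAt A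
      (D * (-((b^2-1)/Qb b (g t)) * (D * -((b^2-1)/Qb b t))) - 1) t := by
    intro t
    have hcomp : HasDerivAt (fun t => Hfun b (g t))
        (-((b^2-1)/Qb b (g t)) * (D * -((b^2-1)/Qb b t))) t :=
      (Hfun_hasDerivAt hb₁ (g t)).comp t (hg_deriv t)
    have := ((hcomp.const_mul D).const_add θ).fun_sub (hasDerivAt_id' t)
    simpa [hAdef] using this
  have hA_cont : Continuous A := by
    have : Continuous g := continuous_const.add (continuous_const.mul (Hfun_cont hb₁))
    exact (continuous_const.add (continuous_const.mul ((Hfun_cont hb₁).comp this))).sub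
      continuous_id
  have hA_pos_deriv : ∀ t ∈ Icc p π,
      0 < D * (-((b^2-1)/Qb b (g t)) * (D * -((b^2-1)/Qb b t))) - 1 := by
    intro t ht
    have hq1 : Qb b (g t) ≤ (b+1)^2 := Qb_le hb₁ _
    have hq2 : Qb b t ≤ Qb b p := hQple t ht
    have hqp1 : 0 < Qb b (g t) := Qb_pos hb₁ _
    have hqp2 : 0 < Qb b t := Qb_pos hb₁ _
    have hqpp : 0 < Qb b p := Qb_pos hb₁ _
    have e1 : D * (-((b^2-1)/Qb b (g t)) * (D * -((b^2-1)/Qb b t)))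
        = D^2 * ((b^2-1)*(b^2-1)) / (Qb b (g t) * Qb b t) := by
      field_simp
    rw [e1]
    rw [lt_sub_iff_add_lt, zero_add, lt_div_iff₀ (by positivity)]
    have hprod : Qb b (g t) * Qb b t ≤ (b+1)^2 * Qb b p := by
      apply mul_le_mul hq1 hq2 hqp2.le (by positivity)
    have : (b+1)^2 * Qb b p < (b+1)^2 * (D^2*(b-1)^2) := by
      apply mul_lt_mul_of_pos_left hQp (by positivity)
    nlinarith
  have hAmono : StrictMonoOn A (Icc p π) := by
    apply strictMonoOn_of_deriv_pos (convex_Icc p π) hA_cont.continuousOn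
    intro x hx
    rw [interior_Icc] at hx
    rw [(hA_deriv x).deriv]
    exact hA_pos_deriv x ⟨hx.1.le, hx.2.le⟩
  -- F is strictly decreasing on [p, π] hence F θ < 0, hence A θ > 0
  have hFanti : StrictAntiOn (fun α => α + D * Hfun b α) (Icc p π) := by
    apply strictAntiOn_of_deriv_neg (convex_Icc p π)
    · exact (continuous_id.add (continuous_const.mul (Hfun_cont hb₁))).continuousOn
    · intro x hx
      rw [interior_Icc] at hx
      have hder : HasDerivAt (fun α => α + D * Hfun b α) (1 + D * -((b^2-1)/Qb b x)) x :=
        (hasDerivAt_id x).add ((Hfun_hasDerivAt hb₁ x).const_mul D)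
      rw [hder.deriv]
      have hx' : x ∈ Icc p π := ⟨hx.1.le, hx.2.le⟩
      have h1 := hQDsmall x hx'
      have hqpos := Qb_pos hb₁ x
      have : 1 < D*(b^2-1)/Qb b x := (one_lt_div hqpos).mpr h1
      have e : D * -((b^2-1)/Qb b x) = -(D*(b^2-1)/Qb b x) := by ring
      rw [e]
      linarith
  have hFθ : θ + D * Hfun b θ < 0 := by
    have h := hFanti (Set.mem_Icc.mpr ⟨le_refl p, hpπ.le⟩)
      (Set.mem_Icc.mpr ⟨hpθ.le, hθπ.le⟩) hpθ
    simpa [hF1] using h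
  have hAθ : 0 < A θ := by
    have hgθ : g θ = θ + D * Hfun b θ := rfl
    have h1 : 0 < Hfun b (g θ) := by
      rw [hgθ]
      have := Hfun_strictAnti hb₁ hFθ
      rwa [Hfun_zero] at this
    have : A θ = D * Hfun b (g θ) := by rw [hAdef]; ring
    rw [this]
    positivity
  -- orbit
  set T : ℕ → ℝ := fun k => Phi d b (2*k) θ with hTdef
  have hT0 : T 0 = θ := rfl
  have hTrec : ∀ k, T (k+1) = T k + A (T k) := by
    intro k
    have h1 : 2*(k+1) = (2*k+1)+1 := by ring
    have h2 : Phi d b ((2*k+1)+1) θ = θ + D * Hfun b (Phi d b (2*k+1) θ) := rfl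
    have h3 : Phi d b (2*k+1) θ = θ + D * Hfun b (T k) := rfl
    rw [hTdef]
    simp only [h1, h2, h3]
    rw [hAdef, hgdef]
    ring
  have hesc : ∃ k, π < T k := by
    by_contra hcon
    push_neg at hcon
    have hlow : ∀ k, θ + k * A θ ≤ T k := by
      intro k
      induction k with
      | zero => simp [hT0]
      | succ m ih =>
        have hTm_ge : θ ≤ T m := by
          have : (0:ℝ) ≤ m * A θ := by positivity
          linarith
        have hTmem : T m ∈ Icc p π := ⟨by linarith, hcon m⟩
        have hθmem : θ ∈ Icc p π := ⟨hpθ.le, hθπ.le⟩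
        have hmonoA := hAmono.monotoneOn hθmem hTmem hTm_ge
        have := hTrec m
        push_cast
        nlinarith
    obtain ⟨k, hk⟩ := exists_nat_gt ((π - θ)/A θ)
    have : π - θ < k * A θ := by
      rw [div_lt_iff₀ hAθ] at hk
      linarith
    have := hlow k
    have := hcon k
    linarith
  obtain ⟨k, hk⟩ := hesc
  -- Phi (2k) p = p
  have hPhi_p : ∀ m, Phi d b (2*m) p = p := by
    intro m
    induction m with
    | zero => rfl
    | succ j ih =>
      have h1 : 2*(j+1) = (2*j+1)+1 := by ring
      have h2 : Phi d b ((2*j+1)+1) p = p + D * Hfun b (Phi d b (2*j+1) p) := rfl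
      have h3 : Phi d b (2*j+1) p = p + D * Hfun b (Phi d b (2*j) p) := rfl
      rw [h1, h2, h3, ih]
      have : p + D * Hfun b p = 0 := hF1
      rw [this, Hfun_zero]
      ring
  -- IVT
  have hcont2k := Phi_cont hb₁ d (2*k)
  have hsub := intermediate_value_Icc hpθ.le (hcont2k.continuousOn (s := Icc p θ))
  have hπmem : π ∈ Icc (Phi d b (2*k) p) (Phi d b (2*k) θ) := by
    rw [hPhi_p k]
    exact ⟨hpπ.le, hk.le⟩
  obtain ⟨θh, hθhmem, hθh⟩ := hsub hπmem
  -- conclusion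
  have hdist : |θh - p| ≤ δ := by
    rw [abs_of_nonneg (by linarith [hθhmem.1])]
    have := hθhmem.2
    rw [hθdef] at this
    linarith
  have habs : ∀ x y : ℝ, |x - y| ≤ δ →
      ‖Complex.exp (x*Complex.I) - Complex.exp (y*Complex.I)‖ < ε := by
    intro x y hxy
    have e1 : Complex.exp (x*Complex.I) - Complex.exp (y*Complex.I)
        = Complex.exp (y*Complex.I) * (Complex.exp (((x-y:ℝ))*Complex.I) - 1) := by
      rw [mul_sub, ← Complex.exp_add, mul_one]
      push_cast
      ring_nf
    rw [e1, norm_mul, Complex.norm_exp_ofReal_mul_I, one_mul]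
    have habs1 : ‖((x-y:ℝ):ℂ)*Complex.I‖ ≤ 1 := by
      rw [norm_mul, Complex.norm_I, mul_one, Complex.norm_real, Real.norm_eq_abs]
      have : δ ≤ 1 := by
        have h1 : (π - p)/4 ≤ 1 := by nlinarith [Real.pi_lt_d2, hp0]
        linarith
      linarith [hxy]
    have := Complex.norm_exp_sub_one_le habs1
    rw [norm_mul, Complex.norm_I, mul_one, Complex.norm_real, Real.norm_eq_abs] at this
    calc ‖Complex.exp (((x-y:ℝ))*Complex.I) - 1‖ ≤ 2*|x-y| := this
      _ ≤ 2*δ := by linarith [hxy]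
      _ < ε := by linarith [hδε, hε]
  constructor
  · refine ⟨Complex.exp (θh * Complex.I), ?_, 2*k, ?_⟩
    · exact habs θh p hdist
    · rw [Phi_iter hb₁ d (2*k) θh, hθh]
      exact Complex.exp_pi_mul_I
  · refine ⟨Complex.exp (((-θh : ℝ)) * Complex.I), ?_, 2*k, ?_⟩
    · have : Complex.exp (-((αb:ℝ) * Complex.I)) = Complex.exp (((-p:ℝ)) * Complex.I) := by
        rw [hpdef]; push_cast; ring_nf
      rw [this]
      have h2 : |(-θh) - (-p)| ≤ δ := by
        rw [show (-θh) - (-p) = -(θh - p) by ring, abs_neg]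
        exact hdist
      exact habs (-θh) (-p) h2
    · rw [Phi_iter hb₁ d (2*k) (-θh), Phi_odd, hθh]
      push_cast
      rw [show (-(π:ℝ):ℂ) * Complex.I = -((π:ℝ)*Complex.I) by push_cast; ring]
      rw [Complex.exp_neg, Complex.exp_pi_mul_I]
      norm_num
end
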